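/- arXiv:2311.01351 — 3 statements merged into one kernel-verified Lean document; each statement's English description precedes it below -/
import Mathlib

section
/- The properified unravelled canonical model of SC has no empty world: in the unravelling U(Mc) of the canonical pseudo-model of SC (and hence in its quotient by the equivalence ≡), every history h has at least one alive agent, i.e., there exists a ∈ A with h ∼^U_a h. -/
attribute [local instance] Classical.propDecidable

noncomputable section

/-- Formulas of the epistemic language `L_D` with distributed knowledge `D_B`
for nonempty groups `B` of agents. -/
inductive Form (A AP : Type) : Type
  | atom : AP → Form A AP
  | neg  : Form A AP → Form A AP
  | and  : Form A AP → Form A AP → Form A AP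
  | dk   : (B : Finset A) → B.Nonempty → Form A AP → Form A AP

namespace Form

variable {A AP : Type}

/-- Disjunction, `φ ∨ ψ := ¬(¬φ ∧ ¬ψ)`. -/
def or (φ ψ : Form A AP) : Form A AP := neg ((neg φ).and (neg ψ))

/-- Implication, `φ ⇒ ψ := ¬φ ∨ ψ`. -/
def imp (φ ψ : Form A AP) : Form A AP := (neg φ).or ψ

/-- `⊤ := p ∨ ¬p`. -/
def verum [Nonempty AP] : Form A AP :=
  (atom (Classical.arbitrary AP)).or (neg (atom (Classical.arbitrary AP)))

/-- `⊥ := ¬⊤`. -/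
def falsum [Nonempty AP] : Form A AP := neg verum

/-- Individual knowledge `K_a φ := D_{{a}} φ`. -/
def K (a : A) (φ : Form A AP) : Form A AP := dk {a} (Finset.singleton_nonempty a) φ

/-- `dead_a := K_a ⊥`. -/
def deadAgent [Nonempty AP] (a : A) : Form A AP := K a falsum

/-- `alive_a := ¬dead_a`. -/
def aliveAgent [Nonempty AP] (a : A) : Form A AP := (deadAgent a).neg

/-- `alive_B := ¬ D_B ⊥`. -/
def aliveGrp [Nonempty AP] (B : Finset A) (hB : B.Nonempty) : Form A AP := (dk B hB falsum).neg

/-- Finite conjunction. -/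
def bigAnd [Nonempty AP] : List (Form A AP) → Form A AP
  | [] => verum
  | φ :: t => φ.and (bigAnd t)

/-- Finite disjunction. -/
def bigOr [Nonempty AP] : List (Form A AP) → Form A AP
  | [] => falsum
  | φ :: t => φ.or (bigOr t)

/-- `dead_C := ⋀_{a ∈ C} dead_a`. -/
def deadGrp [Nonempty AP] (C : Finset A) : Form A AP := bigAnd (C.toList.map deadAgent)

end Form

/-- A propositional tautology: true under every assignment that interprets `¬` and `∧`
classically (atoms and `D_B`-formulas are treated as opaque). -/
def IsTaut {A AP : Type} (φ : Form A AP) : Prop :=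
  ∀ v : Form A AP → Prop,
    (∀ ψ : Form A AP, v ψ.neg ↔ ¬ v ψ) →
    (∀ ψ χ : Form A AP, v (ψ.and χ) ↔ (v ψ ∧ v χ)) →
    v φ

theorem unionNE {α : Type} [DecidableEq α] {s t : Finset α} (h : s.Nonempty) :
    (s ∪ t).Nonempty :=
  ⟨h.choose, Finset.mem_union_left _ h.choose_spec⟩

section ProofSystem

variable {A AP : Type} [Fintype A] [Nonempty AP]

/-- The proof system `SC` (axioms `K`, `B`, `4`, `Mono`, `Union`, `NE`, `P`, all
propositional tautologies, modus ponens and necessitation), extended by an arbitrary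
additional set `Ax` of axioms. -/
inductive Prf (Ax : Form A AP → Prop) : Form A AP → Prop
  | taut {φ : Form A AP} : IsTaut φ → Prf Ax φ
  | mp {φ ψ : Form A AP} : Prf Ax (φ.imp ψ) → Prf Ax φ → Prf Ax ψ
  | nec {φ : Form A AP} (B : Finset A) (hB : B.Nonempty) :
      Prf Ax φ → Prf Ax (Form.dk B hB φ)
  | axK {φ ψ : Form A AP} (B : Finset A) (hB : B.Nonempty) :
      Prf Ax ((Form.dk B hB (φ.imp ψ)).imp ((Form.dk B hB φ).imp (Form.dk B hB ψ)))
  | axB {φ : Form A AP} (B : Finset A) (hB : B.Nonempty) :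
      Prf Ax (φ.imp (Form.dk B hB (Form.neg (Form.dk B hB φ.neg))))
  | ax4 {φ : Form A AP} (B : Finset A) (hB : B.Nonempty) :
      Prf Ax ((Form.dk B hB φ).imp (Form.dk B hB (Form.dk B hB φ)))
  | axMono {φ : Form A AP} (B B' : Finset A) (hB : B.Nonempty) (hB' : B'.Nonempty)
      (hsub : B ⊆ B') : Prf Ax ((Form.dk B hB φ).imp (Form.dk B' hB' φ))
  | axUnion (B B' : Finset A) (hB : B.Nonempty) (hB' : B'.Nonempty) :
      Prf Ax (((Form.aliveGrp B hB).and (Form.aliveGrp B' hB')).imp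
        (Form.aliveGrp (B ∪ B') (unionNE hB)))
  | axNE : Prf Ax (Form.bigOr ((Finset.univ : Finset A).toList.map Form.aliveAgent))
  | axP {φ : Form A AP} (B : Finset A) (hB : B.Nonempty) :
      Prf Ax ((((Form.aliveGrp B hB).and (Form.deadGrp Bᶜ)).and φ).imp
        (Form.dk B hB ((Form.deadGrp Bᶜ).imp φ)))
  | extra {φ : Form A AP} : Ax φ → Prf Ax φ

/-- Provability in `SC` itself (no extra axioms). -/
def SC : Form A AP → Prop := Prf (fun _ => False)

/-- Instances of Axiom `Min : alive_B ∧ dead_{A∖B} ⇒ D_B dead_{A∖B}` for `B ⊊ A`. -/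
def MinAx : Form A AP → Prop := fun φ =>
  ∃ (B : Finset A) (hB : B.Nonempty), B ≠ Finset.univ ∧
    φ = ((Form.aliveGrp B hB).and (Form.deadGrp Bᶜ)).imp (Form.dk B hB (Form.deadGrp Bᶜ))

/-- Instances of Axiom `Max : alive_B ⇒ ¬ D_B ¬ dead_{A∖B}` for `B ⊊ A`. -/
def MaxAx : Form A AP → Prop := fun φ =>
  ∃ (B : Finset A) (hB : B.Nonempty), B ≠ Finset.univ ∧
    φ = (Form.aliveGrp B hB).imp (Form.neg (Form.dk B hB (Form.neg (Form.deadGrp Bᶜ))))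

/-- Provability in `SCmin = SC + Min`. -/
def SCmin : Form A AP → Prop := Prf MinAx

/-- Provability in `SCmax = SC + Max`. -/
def SCmax : Form A AP → Prop := Prf MaxAx

/-- `Γ ⊢_P φ` : some finite conjunction of members of `Γ` provably implies `φ`. -/
def ProvesFrom (P : Form A AP → Prop) (Γ : Set (Form A AP)) (φ : Form A AP) : Prop :=
  ∃ L : List (Form A AP), (∀ γ ∈ L, γ ∈ Γ) ∧ P ((Form.bigAnd L).imp φ)

/-- Consistency of a set of formulas with respect to a provability predicate `P`. -/
def ConsistentSet (P : Form A AP → Prop) (Γ : Set (Form A AP)) : Prop :=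
  ¬ ProvesFrom P Γ Form.falsum

/-- Maximal consistent sets of formulas. -/
def MaxConsistent (P : Form A AP → Prop) (Γ : Set (Form A AP)) : Prop :=
  ConsistentSet P Γ ∧ ∀ φ ∉ Γ, ¬ ConsistentSet P (insert φ Γ)

end ProofSystem

/-! ### Simplicial models -/

/-- The data of a (generalized) simplicial model: a set `S` of simplexes over the vertex
type `V`, a colouring `chi`, a set of worlds `Wld` and a labelling of worlds. -/
structure SimpData (A AP V : Type) where
  S : Set (Finset V)
  chi : V → A
  Wld : Set (Finset V)
  label : Finset V → Set AP

namespace SimpData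

variable {A AP V : Type}

/-- A facet: a simplex maximal under inclusion. -/
def IsFacet (C : SimpData A AP V) (X : Finset V) : Prop :=
  X ∈ C.S ∧ ∀ Y ∈ C.S, X ⊆ Y → X = Y

/-- `⟨V,S,chi⟩` is a chromatic simplicial complex: simplexes are nonempty, every
singleton is a simplex, `S` is downward closed, and every simplex has pairwise
distinct colours. -/
def IsComplex (C : SimpData A AP V) : Prop :=
  (∀ X ∈ C.S, X.Nonempty) ∧
  (∀ v : V, ({v} : Finset V) ∈ C.S) ∧
  (∀ X ∈ C.S, ∀ Y : Finset V, Y ⊆ X → Y.Nonempty → Y ∈ C.S) ∧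
  (∀ X ∈ C.S, ∀ v ∈ X, ∀ w ∈ X, C.chi v = C.chi w → v = w)

/-- `C` is a generalized simplicial model: a chromatic simplicial complex together
with a set of worlds `Wld` with `Facets(C) ⊆ Wld ⊆ S`. -/
def IsModel (C : SimpData A AP V) : Prop :=
  C.IsComplex ∧ (∀ X, C.IsFacet X → X ∈ C.Wld) ∧ C.Wld ⊆ C.S

/-- The model is minimal: the worlds are exactly the facets. -/
def Minimal (C : SimpData A AP V) : Prop := ∀ X, X ∈ C.Wld ↔ C.IsFacet X

/-- The model is maximal: every simplex is a world. -/
def Maximal (C : SimpData A AP V) : Prop := C.Wld = C.S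

end SimpData

/-- Satisfaction on simplicial models: `C,w ⊨ D_B φ` iff `φ` holds at every world `w'`
with `B ⊆ chi(w ∩ w')`. -/
def SimpData.sat {A AP V : Type} (C : SimpData A AP V) : Finset V → Form A AP → Prop
  | w, .atom p => p ∈ C.label w
  | w, .neg φ => ¬ C.sat w φ
  | w, .and φ ψ => C.sat w φ ∧ C.sat w ψ
  | w, .dk B _ φ => ∀ w' ∈ C.Wld, (↑B : Set A) ⊆ C.chi '' ((↑w : Set V) ∩ ↑w') → C.sat w' φ

/-! ### Partial epistemic models -/

/-- The data of a partial epistemic model: an accessibility relation for each agent and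
a labelling of worlds. -/
structure PEData (A AP W : Type) where
  rel : A → W → W → Prop
  label : W → Set AP

namespace PEData

variable {A AP W : Type}

/-- Each relation is a partial equivalence relation (symmetric and transitive). -/
def IsPE (M : PEData A AP W) : Prop := ∀ a : A, Symmetric (M.rel a) ∧ Transitive (M.rel a)

/-- The set of agents alive in a world. -/
def live (M : PEData A AP W) (w : W) : Set A := {a | M.rel a w w}

/-- Every world has at least one alive agent. -/
def NoEmptyWorld (M : PEData A AP W) : Prop := ∀ w : W, (M.live w).Nonempty

/-- Distinct worlds with the same alive agents are distinguished by some alive agent. -/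
def Proper (M : PEData A AP W) : Prop :=
  ∀ w w' : W, w ≠ w' → M.live w = M.live w' → ∃ a ∈ M.live w, ¬ M.rel a w w'

/-- The model has no sub-world. -/
def Minimal (M : PEData A AP W) : Prop :=
  ∀ w w' : W, M.live w ⊂ M.live w' → ∃ a ∈ M.live w, ¬ M.rel a w w'

/-- The model has all sub-worlds. -/
def Maximal (M : PEData A AP W) : Prop :=
  ∀ w' : W, ∀ B : Set A, B.Nonempty → B ⊂ M.live w' →
    ∃ w : W, M.live w = B ∧ ∀ a ∈ B, M.rel a w w'

end PEData

/-- Satisfaction on partial epistemic models: `M,w ⊨ D_B φ` iff `φ` holds at every `w'`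
with `w ∼_a w'` for all `a ∈ B`. -/
def PEData.sat {A AP W : Type} (M : PEData A AP W) : W → Form A AP → Prop
  | w, .atom p => p ∈ M.label w
  | w, .neg φ => ¬ M.sat w φ
  | w, .and φ ψ => M.sat w φ ∧ M.sat w ψ
  | w, .dk B _ φ => ∀ w' : W, (∀ a ∈ B, M.rel a w w') → M.sat w' φ

/-- The partial epistemic model `κ(C)` associated with a simplicial model `C`:
same worlds, `w ∼_a w'` iff `a ∈ chi(w ∩ w')`, same labelling. -/
def kappa {A AP V : Type} (C : SimpData A AP V) : PEData A AP {w : Finset V // w ∈ C.Wld} where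
  rel := fun a w w' => a ∈ C.chi '' ((↑w.1 : Set V) ∩ ↑w'.1)
  label := fun w => C.label w.1

/-- Vertices of `σ(M)`: pairs `v^w_a = (a, [w]_a)` with `a` alive in `w`. -/
def sigmaVert {A AP W : Type} (M : PEData A AP W) : Type :=
  {v : A × Set W // ∃ w : W, M.rel v.1 w w ∧ v.2 = {w' | M.rel v.1 w w'}}

/-- The world `X_w = { v^w_a | a ∈ live(w) }` of `σ(M)`. -/
def sigmaWorld {A AP W : Type} [Fintype A] (M : PEData A AP W) (w : W) :
    Finset (sigmaVert M) :=
  ((Finset.univ : Finset A).filter (fun a => M.rel a w w)).attach.image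
    (fun a => ⟨(a.1, {w' | M.rel a.1 w w'}),
      ⟨w, by exact (Finset.mem_filter.mp a.2).2, rfl⟩⟩)

/-- The simplicial model `σ(M)` associated with a partial epistemic model `M`:
simplexes are the nonempty subsets of the sets `X_w`, worlds are the `X_w`,
colouring is the first projection, and `ℓ(X_w) = L(w)`. -/
def sigmaModel {A AP W : Type} [Fintype A] (M : PEData A AP W) :
    SimpData A AP (sigmaVert M) where
  S := {X | X.Nonempty ∧ ∃ w : W, X ⊆ sigmaWorld M w}
  chi := fun v => v.1.1
  Wld := {X | ∃ w : W, X = sigmaWorld M w}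
  label := fun X => {p | ∃ w : W, X = sigmaWorld M w ∧ p ∈ M.label w}

/-! ### Pseudo-models, the canonical model and unravelling -/

/-- The data of a pseudo-model: a relation `∼_B` for every group `B ⊆ A`. -/
structure PseudoData (A AP W : Type) where
  rel : Finset A → W → W → Prop
  label : W → Set AP

/-- `M` is a pseudo-model: each `∼_B` is symmetric and transitive, the relations are
antitone (`∼_{B'} ⊆ ∼_B` for `B ⊆ B'`), and `w ∼_B w` together with `w ∼_{B'} w`
implies `w ∼_{B ∪ B'} w`. -/
def PseudoData.IsPseudo {A AP W : Type} [DecidableEq A] (M : PseudoData A AP W) : Prop :=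
  (∀ B : Finset A, Symmetric (M.rel B)) ∧
  (∀ B : Finset A, Transitive (M.rel B)) ∧
  (∀ B B' : Finset A, B ⊆ B' → ∀ w w' : W, M.rel B' w w' → M.rel B w w') ∧
  (∀ (w : W) (B B' : Finset A), M.rel B w w → M.rel B' w w → M.rel (B ∪ B') w w)

/-- Satisfaction on pseudo-models: `D_B φ` quantifies over `∼_B`-successors. -/
def PseudoData.sat {A AP W : Type} (M : PseudoData A AP W) : W → Form A AP → Prop
  | w, .atom p => p ∈ M.label w
  | w, .neg φ => ¬ M.sat w φ
  | w, .and φ ψ => M.sat w φ ∧ M.sat w ψ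
  | w, .dk B _ φ => ∀ w' : W, M.rel B w w' → M.sat w' φ

/-- The canonical pseudo-model of a proof system `P`: worlds are the maximal
`P`-consistent sets, `Γ ∼_B Δ` iff every `φ` with `D_B φ ∈ Γ` satisfies `φ ∈ Δ`,
and `L(Γ) = Γ ∩ AP`. -/
def canonicalPsm (A AP : Type) [Fintype A] [Nonempty AP] (P : Form A AP → Prop) :
    PseudoData A AP {Γ : Set (Form A AP) // MaxConsistent P Γ} where
  rel := fun B Γ Δ => ∀ (hB : B.Nonempty) (φ : Form A AP), Form.dk B hB φ ∈ Γ.1 → φ ∈ Δ.1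
  label := fun Γ => {p | Form.atom p ∈ Γ.1}

/-- `IsHist M w l` : the sequence starting at `w` with steps `l` is a history of `M`. -/
def IsHist {A AP W : Type} (M : PseudoData A AP W) : W → List (Finset A × W) → Prop
  | _, [] => True
  | w, (B, w') :: t => M.rel B w w' ∧ IsHist M w' t

/-- A history `(w₀, B₁, w₁, …, B_k, w_k)` of a pseudo-model `M`. -/
structure Hist {A AP W : Type} (M : PseudoData A AP W) where
  first : W
  steps : List (Finset A × W)
  valid : IsHist M first steps

/-- The last world of a history. -/
def Hist.last {A AP W : Type} {M : PseudoData A AP W} (h : Hist M) : W :=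
  (h.steps.map Prod.snd).getLastD h.first

/-- `h →_a h'` : `h'` extends `h` by one step `(B, w)` with `a ∈ B`. -/
def histStep {A AP W : Type} (M : PseudoData A AP W) (a : A) (h h' : Hist M) : Prop :=
  ∃ (B : Finset A) (w : W), a ∈ B ∧ h'.first = h.first ∧ h'.steps = h.steps ++ [(B, w)]

/-- `∼^U_a` : the symmetric-transitive closure of `→_a`. -/
def histRel {A AP W : Type} (M : PseudoData A AP W) (a : A) : Hist M → Hist M → Prop :=
  Relation.TransGen (fun h h' => histStep M a h h' ∨ histStep M a h' h)

/-- The unravelling `U(M)` of a pseudo-model `M`: worlds are histories, relations are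
the `∼^U_a`, and `L^U(h) = L(last h)`. -/
def unravel {A AP W : Type} (M : PseudoData A AP W) : PEData A AP (Hist M) where
  rel := histRel M
  label := fun h => M.label h.last

/-- World-equivalence `w ≡ w'` : same alive agents and related by every alive agent. -/
def pequiv {A AP W : Type} (M : PEData A AP W) (w w' : W) : Prop :=
  M.live w = M.live w' ∧ ∀ a ∈ M.live w, M.rel a w w'

/-- The quotient of a partial epistemic model by world-equivalence. -/
def properify {A AP W : Type} (M : PEData A AP W) : PEData A AP (Quot (pequiv M)) where
  rel := fun a x y => ∃ w w' : W, x = Quot.mk _ w ∧ y = Quot.mk _ w' ∧ M.rel a w w'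
  label := fun x => {p | ∃ w : W, x = Quot.mk _ w ∧ p ∈ M.label w}

/-! ### Local simplicial models, morphisms and the guarded positive fragment -/

/-- The data of a local simplicial model: atomic propositions label the vertices. -/
structure LocalSimpData (A AP V : Type) where
  S : Set (Finset V)
  chi : V → A
  Wld : Set (Finset V)
  vlabel : V → Set AP

namespace LocalSimpData

variable {A AP V : Type}

/-- A facet: a simplex maximal under inclusion. -/
def IsFacet (C : LocalSimpData A AP V) (X : Finset V) : Prop :=
  X ∈ C.S ∧ ∀ Y ∈ C.S, X ⊆ Y → X = Y

/-- `C` is a local simplicial model with respect to the ownership map `owner : AP → A`: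
a chromatic simplicial complex with `Facets ⊆ Wld ⊆ S`, where each vertex is labelled
with atomic propositions belonging to its colour. -/
def IsModel (C : LocalSimpData A AP V) (owner : AP → A) : Prop :=
  (∀ X ∈ C.S, X.Nonempty) ∧
  (∀ v : V, ({v} : Finset V) ∈ C.S) ∧
  (∀ X ∈ C.S, ∀ Y : Finset V, Y ⊆ X → Y.Nonempty → Y ∈ C.S) ∧
  (∀ X ∈ C.S, ∀ v ∈ X, ∀ w ∈ X, C.chi v = C.chi w → v = w) ∧
  (∀ X, C.IsFacet X → X ∈ C.Wld) ∧ C.Wld ⊆ C.S ∧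
  (∀ v : V, ∀ p ∈ C.vlabel v, owner p = C.chi v)

/-- The labelling of a world: the union of the labellings of its vertices. -/
def wlabel (C : LocalSimpData A AP V) (X : Finset V) : Set AP :=
  ⋃ v ∈ X, C.vlabel v

end LocalSimpData

/-- Purely propositional formulas. -/
inductive PForm (AP : Type) : Type
  | atom : AP → PForm AP
  | neg : PForm AP → PForm AP
  | and : PForm AP → PForm AP → PForm AP

/-- The atomic propositions occurring in a propositional formula. -/
def PForm.atoms {AP : Type} : PForm AP → Set AP
  | .atom p => {p}
  | .neg ψ => ψ.atoms
  | .and ψ χ => ψ.atoms ∪ χ.atoms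

/-- Satisfaction of propositional formulas at a world of a local simplicial model. -/
def PForm.psat {A AP V : Type} (C : LocalSimpData A AP V) (w : Finset V) : PForm AP → Prop
  | .atom p => p ∈ C.wlabel w
  | .neg ψ => ¬ PForm.psat C w ψ
  | .and ψ χ => PForm.psat C w ψ ∧ PForm.psat C w χ

/-- The guarded positive epistemic fragment:
`φ ::= (alive_B ⇒ ψ_B) | φ∧φ | φ∨φ | D_U φ | C_U φ`. -/
inductive GForm (A AP : Type) : Type
  | guard : Finset A → PForm AP → GForm A AP
  | and : GForm A AP → GForm A AP → GForm A AP
  | or : GForm A AP → GForm A AP → GForm A AP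
  | dk : Finset A → GForm A AP → GForm A AP
  | ck : Finset A → GForm A AP → GForm A AP

/-- Well-formedness of guarded formulas: in a guard `alive_B ⇒ ψ_B`, all atomic
propositions of `ψ_B` belong to agents of `B`. -/
def GForm.WF {A AP : Type} (owner : AP → A) : GForm A AP → Prop
  | .guard B ψ => ∀ p ∈ ψ.atoms, owner p ∈ B
  | .and φ₁ φ₂ => φ₁.WF owner ∧ φ₂.WF owner
  | .or φ₁ φ₂ => φ₁.WF owner ∧ φ₂.WF owner
  | .dk _ φ => φ.WF owner
  | .ck _ φ => φ.WF owner

/-- Reachability through a sequence of worlds, consecutive ones sharing a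
`U`-coloured simplex. -/
def creach {A AP V : Type} (C : LocalSimpData A AP V) (U : Finset A) :
    Finset V → Finset V → Prop :=
  Relation.ReflTransGen
    (fun X Y => Y ∈ C.Wld ∧ (↑U : Set A) ⊆ C.chi '' ((↑X : Set V) ∩ ↑Y))

/-- Satisfaction of guarded positive formulas on local simplicial models. -/
def GForm.gsat {A AP V : Type} (C : LocalSimpData A AP V) :
    Finset V → GForm A AP → Prop
  | w, .guard B ψ => ((↑B : Set A) ⊆ C.chi '' (↑w : Set V)) → ψ.psat C w
  | w, .and φ₁ φ₂ => φ₁.gsat C w ∧ φ₂.gsat C w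
  | w, .or φ₁ φ₂ => φ₁.gsat C w ∨ φ₂.gsat C w
  | w, .dk U φ => ∀ w' ∈ C.Wld, (↑U : Set A) ⊆ C.chi '' ((↑w : Set V) ∩ ↑w') → φ.gsat C w'
  | w, .ck U φ => ∀ w' ∈ C.Wld, creach C U w w' → φ.gsat C w'

/-- Image of a simplex under a vertex map. -/
def fimage {V V' : Type} (f : V → V') (X : Finset V) : Finset V' :=
  X.image f

/-- Morphisms of local simplicial models: map simplexes to simplexes and worlds to
worlds, preserving colours and vertex labellings. -/
def IsMorphism {A AP V V' : Type} (C : LocalSimpData A AP V) (D : LocalSimpData A AP V')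
    (f : V → V') : Prop :=
  (∀ X ∈ C.S, fimage f X ∈ D.S) ∧
  (∀ X ∈ C.Wld, fimage f X ∈ D.Wld) ∧
  (∀ v : V, D.chi (f v) = C.chi v) ∧
  (∀ v : V, D.vlabel (f v) = C.vlabel v)

end

section MyAux

open Form

variable {A AP : Type} [Fintype A] [Nonempty AP] {Ax : Form A AP → Prop}

private lemma v_imp {v : Form A AP → Prop}
    (hn : ∀ ψ : Form A AP, v ψ.neg ↔ ¬ v ψ)
    (ha : ∀ ψ χ : Form A AP, v (ψ.and χ) ↔ (v ψ ∧ v χ)) (φ ψ : Form A AP) :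
    v (φ.imp ψ) ↔ (v φ → v ψ) := by
  simp only [Form.imp, Form.or, hn, ha]; tauto

private lemma v_or {v : Form A AP → Prop}
    (hn : ∀ ψ : Form A AP, v ψ.neg ↔ ¬ v ψ)
    (ha : ∀ ψ χ : Form A AP, v (ψ.and χ) ↔ (v ψ ∧ v χ)) (φ ψ : Form A AP) :
    v (φ.or ψ) ↔ (v φ ∨ v ψ) := by
  simp only [Form.or, hn, ha]; tauto

private lemma v_verum {v : Form A AP → Prop}
    (hn : ∀ ψ : Form A AP, v ψ.neg ↔ ¬ v ψ)
    (ha : ∀ ψ χ : Form A AP, v (ψ.and χ) ↔ (v ψ ∧ v χ)) :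
    v (verum : Form A AP) := by
  simp only [Form.verum, Form.or, hn, ha]; tauto

private lemma v_falsum {v : Form A AP → Prop}
    (hn : ∀ ψ : Form A AP, v ψ.neg ↔ ¬ v ψ)
    (ha : ∀ ψ χ : Form A AP, v (ψ.and χ) ↔ (v ψ ∧ v χ)) :
    ¬ v (falsum : Form A AP) := by
  simp only [Form.falsum, hn]
  exact fun h => h (v_verum hn ha)

private lemma v_bigAnd {v : Form A AP → Prop}
    (hn : ∀ ψ : Form A AP, v ψ.neg ↔ ¬ v ψ)
    (ha : ∀ ψ χ : Form A AP, v (ψ.and χ) ↔ (v ψ ∧ v χ)) (L : List (Form A AP)) :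
    v (bigAnd L) ↔ ∀ γ ∈ L, v γ := by
  induction L with
  | nil => simpa [Form.bigAnd] using v_verum hn ha
  | cons φ t ih =>
    simp only [Form.bigAnd, ha, ih, List.mem_cons]
    constructor
    · rintro ⟨h1, h2⟩ γ (rfl | hγ)
      · exact h1
      · exact h2 γ hγ
    · intro h; exact ⟨h φ (Or.inl rfl), fun γ hγ => h γ (Or.inr hγ)⟩

private lemma taut_key {L0 L M : List (Form A AP)} {φ : Form A AP}
    (h0 : ∀ γ ∈ L0, γ ∈ M) (h1 : ∀ γ ∈ L, γ = φ ∨ γ ∈ M) :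
    IsTaut (((bigAnd L0).imp φ).imp
      (((bigAnd L).imp falsum).imp ((bigAnd M).imp falsum))) := by
  intro v hn ha
  simp only [v_imp hn ha, v_bigAnd hn ha]
  intro hA hB hM
  apply hB
  intro γ hγ
  rcases h1 γ hγ with rfl | hγM
  · exact hA (fun δ hδ => hM δ (h0 δ hδ))
  · exact hM γ hγM

private lemma taut_ded {L M : List (Form A AP)} {φ : Form A AP}
    (h1 : ∀ γ ∈ L, γ = φ ∨ γ ∈ M) :
    IsTaut (((bigAnd L).imp falsum).imp ((bigAnd M).imp φ.neg)) := by
  intro v hn ha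
  simp only [v_imp hn ha, v_bigAnd hn ha, hn]
  intro hB hM hφ
  apply v_falsum hn ha
  apply hB
  intro γ hγ
  rcases h1 γ hγ with rfl | hγM
  · exact hφ
  · exact hM γ hγM

private lemma provesFrom_falsum_of {Γ : Set (Form A AP)} {φ : Form A AP}
    (h1 : ProvesFrom (Prf Ax) Γ φ) (h2 : ProvesFrom (Prf Ax) (insert φ Γ) falsum) :
    ProvesFrom (Prf Ax) Γ falsum := by
  obtain ⟨L0, hL0, p0⟩ := h1
  obtain ⟨L, hL, p⟩ := h2
  refine ⟨L0 ++ L.filter (fun γ => γ ∈ Γ), ?_, ?_⟩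
  · intro γ hγ
    rcases List.mem_append.mp hγ with h | h
    · exact hL0 γ h
    · exact of_decide_eq_true (List.mem_filter.mp h).2
  · refine Prf.mp (Prf.mp (Prf.taut (taut_key ?_ ?_)) p0) p
    · intro γ hγ; exact List.mem_append.mpr (Or.inl hγ)
    · intro γ hγ
      rcases hL γ hγ with rfl | hγΓ
      · exact Or.inl rfl
      · exact Or.inr (List.mem_append.mpr (Or.inr
          (List.mem_filter.mpr ⟨hγ, decide_eq_true hγΓ⟩)))

private lemma mcs_mem_of_provesFrom {Γ : Set (Form A AP)}
    (hΓ : MaxConsistent (Prf Ax) Γ) {φ : Form A AP}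
    (h : ProvesFrom (Prf Ax) Γ φ) : φ ∈ Γ := by
  by_contra hφ
  have h2 : ¬ ConsistentSet (Prf Ax) (insert φ Γ) := hΓ.2 φ hφ
  have h2' : ProvesFrom (Prf Ax) (insert φ Γ) falsum := not_not.mp h2
  exact hΓ.1 (provesFrom_falsum_of h h2')

private lemma mcs_mem_of_prf {Γ : Set (Form A AP)}
    (hΓ : MaxConsistent (Prf Ax) Γ) {φ : Form A AP}
    (h : Prf Ax φ) : φ ∈ Γ := by
  apply mcs_mem_of_provesFrom hΓ
  refine ⟨[], by simp, ?_⟩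
  have ht : IsTaut (φ.imp ((bigAnd ([] : List (Form A AP))).imp φ)) := by
    intro v hn ha
    rw [v_imp hn ha, v_imp hn ha]
    exact fun h _ => h
  exact Prf.mp (Prf.taut ht) h

private lemma mcs_mp {Γ : Set (Form A AP)}
    (hΓ : MaxConsistent (Prf Ax) Γ) {φ ψ : Form A AP}
    (h1 : φ.imp ψ ∈ Γ) (h2 : φ ∈ Γ) : ψ ∈ Γ := by
  apply mcs_mem_of_provesFrom hΓ
  refine ⟨[φ.imp ψ, φ], ?_, ?_⟩
  · intro γ hγ
    rcases List.mem_cons.mp hγ with rfl | hγ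
    · exact h1
    · rcases List.mem_cons.mp hγ with rfl | hγ
      · exact h2
      · simp at hγ
  · apply Prf.taut
    intro v hn ha
    rw [v_imp hn ha, v_bigAnd hn ha]
    intro hM
    have hi := hM (φ.imp ψ) (by simp)
    rw [v_imp hn ha] at hi
    exact hi (hM φ (by simp))

private lemma mcs_neg_of_not_mem {Γ : Set (Form A AP)}
    (hΓ : MaxConsistent (Prf Ax) Γ) {φ : Form A AP}
    (h : φ ∉ Γ) : φ.neg ∈ Γ := by
  apply mcs_mem_of_provesFrom hΓ
  have h2 : ProvesFrom (Prf Ax) (insert φ Γ) falsum := not_not.mp (hΓ.2 φ h)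
  obtain ⟨L, hL, p⟩ := h2
  refine ⟨L.filter (fun γ => γ ∈ Γ), ?_, ?_⟩
  · intro γ hγ
    exact of_decide_eq_true (List.mem_filter.mp hγ).2
  · refine Prf.mp (Prf.taut (taut_ded ?_)) p
    intro γ hγ
    rcases hL γ hγ with rfl | hγΓ
    · exact Or.inl rfl
    · exact Or.inr (List.mem_filter.mpr ⟨hγ, decide_eq_true hγΓ⟩)

private lemma mcs_not_mem_of_neg {Γ : Set (Form A AP)}
    (hΓ : MaxConsistent (Prf Ax) Γ) {φ : Form A AP}
    (h : φ.neg ∈ Γ) : φ ∉ Γ := by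
  intro hφ
  apply hΓ.1
  refine ⟨[φ, φ.neg], ?_, ?_⟩
  · intro γ hγ
    rcases List.mem_cons.mp hγ with rfl | hγ
    · exact hφ
    · rcases List.mem_cons.mp hγ with rfl | hγ
      · exact h
      · simp at hγ
  · apply Prf.taut
    intro v hn ha
    rw [v_imp hn ha, v_bigAnd hn ha]
    intro hM
    have h1 := hM φ (by simp)
    have h2 := hM φ.neg (by simp)
    rw [hn] at h2
    exact absurd h1 h2

private lemma mcs_bigOr {Γ : Set (Form A AP)}
    (hΓ : MaxConsistent (Prf Ax) Γ) {L : List (Form A AP)}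
    (h : bigOr L ∈ Γ) : ∃ φ ∈ L, φ ∈ Γ := by
  induction L with
  | nil =>
    exfalso
    apply hΓ.1
    refine ⟨[bigOr []], ?_, ?_⟩
    · intro γ hγ
      rcases List.mem_cons.mp hγ with rfl | hγ
      · exact h
      · simp at hγ
    · apply Prf.taut
      intro v hn ha
      rw [v_imp hn ha, v_bigAnd hn ha]
      intro hM
      exact hM (bigOr []) (by simp)
  | cons φ t ih =>
    by_cases hφ : φ ∈ Γ
    · exact ⟨φ, List.mem_cons_self, hφ⟩
    · have hneg : φ.neg ∈ Γ := mcs_neg_of_not_mem hΓ hφ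
      have htaut : Prf Ax ((φ.or (bigOr t)).imp (φ.neg.imp (bigOr t))) := by
        apply Prf.taut
        intro v hn ha
        rw [v_imp hn ha, v_imp hn ha, v_or hn ha, hn]
        tauto
      have ht : bigOr t ∈ Γ :=
        mcs_mp hΓ (mcs_mp hΓ (mcs_mem_of_prf hΓ htaut) h) hneg
      obtain ⟨ψ, hψt, hψΓ⟩ := ih ht
      exact ⟨ψ, List.mem_cons_of_mem φ hψt, hψΓ⟩

/-- For an alive agent `a`, the canonical relation `∼_{a}` is reflexive at `Γ`. -/
private lemma mcs_alive_refl {Γ : Set (Form A AP)}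
    (hΓ : MaxConsistent (Prf Ax) Γ) {a : A}
    (halive : aliveAgent a ∈ Γ) (hB : ({a} : Finset A).Nonempty) {φ : Form A AP}
    (hK : Form.dk {a} hB φ ∈ Γ) : φ ∈ Γ := by
  by_contra hφ
  have hneg : φ.neg ∈ Γ := mcs_neg_of_not_mem hΓ hφ
  -- K_a K_a φ ∈ Γ
  have h4 : Form.dk {a} hB (Form.dk {a} hB φ) ∈ Γ :=
    mcs_mp hΓ (mcs_mem_of_prf hΓ (Prf.ax4 {a} hB)) hK
  -- K_a ¬K_a ¬¬φ ∈ Γ  (from B axiom at ¬φ)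
  have hb : Form.dk {a} hB ((Form.dk {a} hB φ.neg.neg).neg) ∈ Γ :=
    mcs_mp hΓ (mcs_mem_of_prf hΓ (Prf.axB {a} hB)) hneg
  -- ⊢ K_a φ → K_a ¬¬φ
  have hdne : Prf Ax (φ.imp φ.neg.neg) := by
    apply Prf.taut
    intro v hn ha
    rw [v_imp hn ha, hn, hn]
    tauto
  have hθ : Prf Ax ((Form.dk {a} hB φ).imp (Form.dk {a} hB φ.neg.neg)) :=
    Prf.mp (Prf.axK {a} hB) (Prf.nec {a} hB hdne)
  -- K_a K_a ¬¬φ ∈ Γ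
  have hdd : Form.dk {a} hB (Form.dk {a} hB φ.neg.neg) ∈ Γ := by
    have := Prf.mp (Prf.axK {a} hB) (Prf.nec {a} hB hθ)
    exact mcs_mp hΓ (mcs_mem_of_prf hΓ this) h4
  set α := Form.dk {a} hB φ.neg.neg with hα
  have ht2 : Prf Ax (α.imp (α.neg.imp falsum)) := by
    apply Prf.taut
    intro v hn ha
    rw [v_imp hn ha, v_imp hn ha, hn]
    tauto
  have hstep : Form.dk {a} hB (α.neg.imp falsum) ∈ Γ := by
    have := Prf.mp (Prf.axK {a} hB) (Prf.nec {a} hB ht2)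
    exact mcs_mp hΓ (mcs_mem_of_prf hΓ this) hdd
  have hdead : Form.dk {a} hB (falsum : Form A AP) ∈ Γ :=
    mcs_mp hΓ (mcs_mp hΓ (mcs_mem_of_prf hΓ (Prf.axK {a} hB)) hstep) hb
  exact absurd hdead (mcs_not_mem_of_neg hΓ halive)

end MyAux

section MyMain

variable {A AP W : Type}

private lemma isHist_append {M : PseudoData A AP W} {first : W}
    {steps : List (Finset A × W)} (h : IsHist M first steps) {B : Finset A} {w : W}
    (hr : M.rel B ((steps.map Prod.snd).getLastD first) w) :
    IsHist M first (steps ++ [(B, w)]) := by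
  induction steps generalizing first with
  | nil => exact ⟨hr, trivial⟩
  | cons s t ih =>
    obtain ⟨h1, h2⟩ := h
    refine ⟨h1, ih h2 ?_⟩
    rw [List.map_cons, List.getLastD_cons] at hr
    exact hr

end MyMain

/-- The (properified) unravelled canonical model of `SC` has no empty
world: every history `h` of `Mc` has at least one alive agent, and the same holds in
the quotient by `≡`. -/
theorem unravel_canonical_no_empty (A AP : Type) [Fintype A] [Nonempty AP] :
    (unravel (canonicalPsm A AP SC)).NoEmptyWorld ∧
    (properify (unravel (canonicalPsm A AP SC))).NoEmptyWorld := by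
  have part1 : (unravel (canonicalPsm A AP SC)).NoEmptyWorld := by
    intro h
    have hΓ : MaxConsistent SC h.last.1 := h.last.2
    have hNE : Form.bigOr ((Finset.univ : Finset A).toList.map Form.aliveAgent) ∈ h.last.1 :=
      mcs_mem_of_prf hΓ Prf.axNE
    obtain ⟨φ, hφmem, hφΓ⟩ := mcs_bigOr hΓ hNE
    obtain ⟨a, _, rfl⟩ := List.mem_map.mp hφmem
    have hrel : (canonicalPsm A AP SC).rel {a} h.last h.last := by
      intro hB ψ hψ
      exact mcs_alive_refl hΓ hφΓ hB hψ
    let h' : Hist (canonicalPsm A AP SC) :=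
      ⟨h.first, h.steps ++ [({a}, h.last)], isHist_append h.valid hrel⟩
    have hstep : histStep (canonicalPsm A AP SC) a h h' :=
      ⟨{a}, h.last, Finset.mem_singleton_self a, rfl, rfl⟩
    have hloop : histRel (canonicalPsm A AP SC) a h h :=
      Relation.TransGen.tail (Relation.TransGen.single (Or.inl hstep)) (Or.inr hstep)
    exact ⟨a, hloop⟩
  refine ⟨part1, ?_⟩
  intro x
  induction x using Quot.ind with
  | _ h =>
    obtain ⟨a, ha⟩ := part1 h
    exact ⟨a, h, h, rfl, rfl, ha⟩
end

section
/- Completeness of SC for partial epistemic models: if a formula φ of L_D is valid in every proper partial epistemic model with no empty world (i.e., M,w ⊨ φ for all such M and all worlds w), then φ is provable in the proof system SC. -/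
attribute [local instance] Classical.propDecidable

set_option linter.unusedSectionVars false
/-! ### Auxiliary development for the completeness proof -/

section TautTools

variable {A AP : Type} [Nonempty AP]

/-- A valuation respecting negation and conjunction. -/
def RespVal (v : Form A AP → Prop) : Prop :=
  (∀ ψ : Form A AP, v ψ.neg ↔ ¬ v ψ) ∧ (∀ ψ χ : Form A AP, v (ψ.and χ) ↔ (v ψ ∧ v χ))

theorem RespVal.and_iff {v : Form A AP → Prop} (hv : RespVal v) (ψ χ : Form A AP) :
    v (ψ.and χ) ↔ (v ψ ∧ v χ) := hv.2 ψ χ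

theorem RespVal.neg_iff {v : Form A AP → Prop} (hv : RespVal v) (ψ : Form A AP) :
    v ψ.neg ↔ ¬ v ψ := hv.1 ψ

theorem RespVal.or_iff {v : Form A AP → Prop} (hv : RespVal v) (ψ χ : Form A AP) :
    v (ψ.or χ) ↔ (v ψ ∨ v χ) := by
  unfold Form.or; rw [hv.1, hv.2, hv.1, hv.1]; tauto

theorem RespVal.imp_iff {v : Form A AP → Prop} (hv : RespVal v) (ψ χ : Form A AP) :
    v (ψ.imp χ) ↔ (v ψ → v χ) := by
  unfold Form.imp; rw [hv.or_iff, hv.1]; tauto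

theorem RespVal.verum_iff {v : Form A AP → Prop} (hv : RespVal v) :
    v (Form.verum : Form A AP) := by
  unfold Form.verum; rw [hv.or_iff, hv.1]; tauto

theorem RespVal.falsum_iff {v : Form A AP → Prop} (hv : RespVal v) :
    ¬ v (Form.falsum : Form A AP) := by
  unfold Form.falsum; rw [hv.1]; exact not_not_intro hv.verum_iff

theorem RespVal.bigAnd_iff {v : Form A AP → Prop} (hv : RespVal v) (L : List (Form A AP)) :
    v (Form.bigAnd L) ↔ ∀ γ ∈ L, v γ := by
  induction L with
  | nil => simpa [Form.bigAnd] using hv.verum_iff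
  | cons γ t ih =>
    rw [Form.bigAnd, hv.2, ih]
    constructor
    · rintro ⟨h1, h2⟩ γ' hγ'
      rcases List.mem_cons.mp hγ' with h | h
      · exact h ▸ h1
      · exact h2 γ' h
    · intro h
      exact ⟨h γ (List.mem_cons_self), fun γ' hγ' => h γ' (List.mem_cons_of_mem _ hγ')⟩

theorem RespVal.bigOr_iff {v : Form A AP → Prop} (hv : RespVal v) (L : List (Form A AP)) :
    v (Form.bigOr L) ↔ ∃ γ ∈ L, v γ := by
  induction L with
  | nil => simp [Form.bigOr, hv.falsum_iff]
  | cons γ t ih =>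
    rw [Form.bigOr, hv.or_iff, ih]
    simp

theorem isTaut_def {φ : Form A AP} (h : ∀ v : Form A AP → Prop, RespVal v → v φ) :
    IsTaut φ := fun v hn ha => h v ⟨hn, ha⟩

end TautTools

section PrfTools

variable {A AP : Type} [Fintype A] [Nonempty AP] {Ax : Form A AP → Prop}

theorem Prf.mp1 {φ ψ : Form A AP} (ht : IsTaut (φ.imp ψ)) (h : Prf Ax φ) : Prf Ax ψ :=
  Prf.mp (Prf.taut ht) h

theorem Prf.mp2 {φ₁ φ₂ ψ : Form A AP} (ht : IsTaut (φ₁.imp (φ₂.imp ψ)))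
    (h1 : Prf Ax φ₁) (h2 : Prf Ax φ₂) : Prf Ax ψ :=
  Prf.mp (Prf.mp (Prf.taut ht) h1) h2

theorem Prf.mp3 {φ₁ φ₂ φ₃ ψ : Form A AP} (ht : IsTaut (φ₁.imp (φ₂.imp (φ₃.imp ψ))))
    (h1 : Prf Ax φ₁) (h2 : Prf Ax φ₂) (h3 : Prf Ax φ₃) : Prf Ax ψ :=
  Prf.mp (Prf.mp (Prf.mp (Prf.taut ht) h1) h2) h3

/-- Rule RK: from `⊢ φ ⇒ ψ` infer `⊢ D_B φ ⇒ D_B ψ`. -/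
theorem Prf.dk_mp {φ ψ : Form A AP} (B : Finset A) (hB : B.Nonempty)
    (h : Prf Ax (φ.imp ψ)) :
    Prf Ax ((Form.dk B hB φ).imp (Form.dk B hB ψ)) :=
  Prf.mp (Prf.axK B hB) (Prf.nec B hB h)

end PrfTools
section MCSTools

variable {A AP : Type} [Fintype A] [Nonempty AP] {Ax : Form A AP → Prop}

local notation "P" => Prf Ax

theorem provesFrom_of_prf {Γ : Set (Form A AP)} {φ : Form A AP} (h : P φ) :
    ProvesFrom (Prf Ax) Γ φ := by
  refine ⟨[], fun γ hγ => absurd hγ List.not_mem_nil, ?_⟩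
  exact Prf.mp1 (isTaut_def fun v hv => by rw [hv.imp_iff, hv.imp_iff]; tauto) h

theorem provesFrom_of_mem {Γ : Set (Form A AP)} {φ : Form A AP} (h : φ ∈ Γ) :
    ProvesFrom (Prf Ax) Γ φ := by
  refine ⟨[φ], fun γ hγ => by simpa using (List.mem_singleton.mp hγ) ▸ h, ?_⟩
  exact Prf.taut (isTaut_def fun v hv => by
    rw [hv.imp_iff, hv.bigAnd_iff]; intro h; exact h φ (List.mem_singleton_self φ))

theorem provesFrom_mp {Γ : Set (Form A AP)} {φ ψ : Form A AP}
    (h1 : ProvesFrom (Prf Ax) Γ (φ.imp ψ)) (h2 : ProvesFrom (Prf Ax) Γ φ) :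
    ProvesFrom (Prf Ax) Γ ψ := by
  obtain ⟨L1, hL1, p1⟩ := h1
  obtain ⟨L2, hL2, p2⟩ := h2
  refine ⟨L1 ++ L2, ?_, ?_⟩
  · intro γ hγ; rcases List.mem_append.mp hγ with h | h
    exacts [hL1 γ h, hL2 γ h]
  · refine Prf.mp2 (isTaut_def fun v hv => ?_) p1 p2
    simp only [hv.imp_iff, hv.bigAnd_iff]
    intro hA hB h
    exact (hA fun γ hγ => h γ (List.mem_append_left _ hγ))
      (hB fun γ hγ => h γ (List.mem_append_right _ hγ))

theorem provesFrom_mono {Γ Δ : Set (Form A AP)} {φ : Form A AP} (hsub : Γ ⊆ Δ)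
    (h : ProvesFrom (Prf Ax) Γ φ) : ProvesFrom (Prf Ax) Δ φ := by
  obtain ⟨L, hL, p⟩ := h
  exact ⟨L, fun γ hγ => hsub (hL γ hγ), p⟩

/-- Deduction: `insert φ Γ ⊢ ψ` implies `Γ ⊢ φ ⇒ ψ`. -/
theorem provesFrom_deduction {Γ : Set (Form A AP)} {φ ψ : Form A AP}
    (h : ProvesFrom (Prf Ax) (insert φ Γ) ψ) : ProvesFrom (Prf Ax) Γ (φ.imp ψ) := by
  obtain ⟨L, hL, p⟩ := h
  refine ⟨L.filter (fun γ => γ ∈ Γ), ?_, ?_⟩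
  · intro γ hγ
    simpa using (List.mem_filter.mp hγ).2
  · refine Prf.mp1 (isTaut_def fun v hv => ?_) p
    simp only [hv.imp_iff, hv.bigAnd_iff]
    intro hL' hF hφ
    refine hL' fun γ hγ => ?_
    rcases Set.mem_insert_iff.mp (hL γ hγ) with h | h
    · exact h ▸ hφ
    · exact hF γ (List.mem_filter.mpr ⟨hγ, by simpa using h⟩)

theorem consistent_insert_of_not_provesFrom {Γ : Set (Form A AP)} {φ : Form A AP}
    (hΓ : ¬ ProvesFrom (Prf Ax) Γ φ.neg) : ConsistentSet (Prf Ax) (insert φ Γ) := by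
  intro hcon
  apply hΓ
  have := provesFrom_deduction hcon
  obtain ⟨L, hL, p⟩ := this
  refine ⟨L, hL, Prf.mp1 (isTaut_def fun v hv => ?_) p⟩
  simp only [hv.imp_iff, hv.neg_iff]
  intro h hA hφ
  exact hv.falsum_iff (h hA hφ)

/-- Lindenbaum: every consistent set extends to a maximal consistent set. -/
theorem lindenbaum {Γ : Set (Form A AP)} (h : ConsistentSet (Prf Ax) Γ) :
    ∃ Δ : Set (Form A AP), Γ ⊆ Δ ∧ MaxConsistent (Prf Ax) Δ := by
  obtain ⟨Δ, hsub, hmax⟩ := zorn_subset_nonempty {Δ : Set (Form A AP) | ConsistentSet (Prf Ax) Δ}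
    (fun c hc hchain ⟨x, hx⟩ => by
      refine ⟨⋃₀ c, fun hcon => ?_, fun s hs => Set.subset_sUnion_of_mem hs⟩
      obtain ⟨L, hL, p⟩ := hcon
      -- all members of L lie in a single element of the chain
      have : ∃ s ∈ c, ∀ γ ∈ L, γ ∈ s := by
        clear p
        induction L with
        | nil => exact ⟨x, hx, by simp⟩
        | cons γ t ih =>
          obtain ⟨s, hs, hst⟩ := ih (fun γ hγ => hL γ (List.mem_cons_of_mem _ hγ))
          obtain ⟨s', hs', hγs'⟩ := hL γ (List.mem_cons_self)
          rcases hchain.total hs hs' with hss | hss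
          · exact ⟨s', hs', fun δ hδ => by
              rcases List.mem_cons.mp hδ with h | h
              exacts [h ▸ hγs', hss (hst δ h)]⟩
          · exact ⟨s, hs, fun δ hδ => by
              rcases List.mem_cons.mp hδ with h | h
              exacts [h ▸ hss hγs', hst δ h]⟩
      obtain ⟨s, hsc, hLs⟩ := this
      exact hc hsc ⟨L, hLs, p⟩) Γ h
  refine ⟨Δ, hsub, hmax.prop, fun φ hφ hcon => hφ ?_⟩
  have := hmax.eq_of_subset (by exact hcon) (Set.subset_insert φ Δ)
  rw [this]; exact Set.mem_insert φ Δ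

section MCS

variable {Γ : Set (Form A AP)} (hΓ : MaxConsistent (Prf Ax) Γ)
include hΓ

theorem MaxConsistent.mem_of_provesFrom {φ : Form A AP} (h : ProvesFrom (Prf Ax) Γ φ) : φ ∈ Γ := by
  by_contra hφ
  have hins := hΓ.2 φ hφ
  rw [ConsistentSet, not_not] at hins
  have hd := provesFrom_deduction hins
  exact hΓ.1 (provesFrom_mp hd h)

theorem MaxConsistent.mem_of_prf {φ : Form A AP} (h : Prf Ax φ) : φ ∈ Γ :=
  hΓ.mem_of_provesFrom (provesFrom_of_prf h)

theorem MaxConsistent.mp {φ ψ : Form A AP} (h1 : φ.imp ψ ∈ Γ) (h2 : φ ∈ Γ) : ψ ∈ Γ :=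
  hΓ.mem_of_provesFrom (provesFrom_mp (provesFrom_of_mem h1) (provesFrom_of_mem h2))

theorem MaxConsistent.mp2 {φ₁ φ₂ ψ : Form A AP} (ht : IsTaut (φ₁.imp (φ₂.imp ψ)))
    (h1 : φ₁ ∈ Γ) (h2 : φ₂ ∈ Γ) : ψ ∈ Γ :=
  hΓ.mp (hΓ.mp (hΓ.mem_of_prf (Prf.taut ht)) h1) h2

theorem MaxConsistent.falsum_not_mem : Form.falsum ∉ Γ := fun h =>
  hΓ.1 (provesFrom_of_mem h)

theorem MaxConsistent.neg_mem_iff {φ : Form A AP} : φ.neg ∈ Γ ↔ φ ∉ Γ := by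
  constructor
  · intro h1 h2
    exact hΓ.falsum_not_mem (hΓ.mp2 (isTaut_def fun v hv => by
      simp only [hv.imp_iff, hv.neg_iff]; tauto) h1 h2)
  · intro h1
    by_contra h2
    have hcon := hΓ.2 φ.neg h2
    rw [ConsistentSet, not_not] at hcon
    have hd := provesFrom_deduction hcon
    -- Γ ⊢ ¬φ ⇒ ⊥, hence Γ ⊢ φ
    have : ProvesFrom (Prf Ax) Γ φ := by
      obtain ⟨L, hL, p⟩ := hd
      refine ⟨L, hL, Prf.mp1 (isTaut_def fun v hv => ?_) p⟩
      simp only [hv.imp_iff, hv.neg_iff]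
      intro h hA
      by_contra hφ'
      exact hv.falsum_iff (h hA hφ')
    exact h1 (hΓ.mem_of_provesFrom this)

theorem MaxConsistent.not_mem_iff {φ : Form A AP} : φ ∉ Γ ↔ φ.neg ∈ Γ := (hΓ.neg_mem_iff).symm

theorem MaxConsistent.and_mem_iff {φ ψ : Form A AP} : φ.and ψ ∈ Γ ↔ (φ ∈ Γ ∧ ψ ∈ Γ) := by
  constructor
  · intro h
    constructor
    · exact hΓ.mp (hΓ.mem_of_prf (Prf.taut (isTaut_def fun v hv => by
        simp only [hv.imp_iff, hv.and_iff]; tauto))) h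
    · exact hΓ.mp (hΓ.mem_of_prf (Prf.taut (isTaut_def fun v hv => by
        simp only [hv.imp_iff, hv.and_iff]; tauto))) h
  · rintro ⟨h1, h2⟩
    exact hΓ.mp2 (isTaut_def fun v hv => by
      simp only [hv.imp_iff, hv.and_iff]; tauto) h1 h2

theorem MaxConsistent.mp3 {φ₁ φ₂ φ₃ ψ : Form A AP}
    (ht : IsTaut (φ₁.imp (φ₂.imp (φ₃.imp ψ))))
    (h1 : φ₁ ∈ Γ) (h2 : φ₂ ∈ Γ) (h3 : φ₃ ∈ Γ) : ψ ∈ Γ :=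
  hΓ.mp (hΓ.mp (hΓ.mp (hΓ.mem_of_prf (Prf.taut ht)) h1) h2) h3

theorem MaxConsistent.or_elim {φ ψ : Form A AP} (h : φ.or ψ ∈ Γ) : φ ∈ Γ ∨ ψ ∈ Γ := by
  by_contra hc
  push_neg at hc
  have h1 := hΓ.neg_mem_iff.mpr hc.1
  have h2 := hΓ.neg_mem_iff.mpr hc.2
  exact hΓ.falsum_not_mem (hΓ.mp3 (isTaut_def fun v hv => by
    simp only [hv.imp_iff, hv.neg_iff, hv.or_iff]
    intro hor hn1 hn2
    exact absurd hor (by tauto)) h h1 h2)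

theorem MaxConsistent.bigOr_elim {L : List (Form A AP)} (h : Form.bigOr L ∈ Γ) :
    ∃ γ ∈ L, γ ∈ Γ := by
  induction L with
  | nil =>
    exact absurd h (by
      intro hmem
      exact hΓ.falsum_not_mem hmem)
  | cons γ t ih =>
    rcases hΓ.or_elim h with h' | h'
    · exact ⟨γ, List.mem_cons_self, h'⟩
    · obtain ⟨δ, hδ, hδΓ⟩ := ih h'
      exact ⟨δ, List.mem_cons_of_mem _ hδ, hδΓ⟩

theorem MaxConsistent.bigAnd_mem {L : List (Form A AP)} (h : ∀ γ ∈ L, γ ∈ Γ) :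
    Form.bigAnd L ∈ Γ := by
  induction L with
  | nil => exact hΓ.mem_of_prf (Prf.taut (isTaut_def fun v hv => hv.verum_iff))
  | cons γ t ih =>
    exact (hΓ.and_mem_iff).mpr ⟨h γ (List.mem_cons_self),
      ih fun δ hδ => h δ (List.mem_cons_of_mem _ hδ)⟩

end MCS

end MCSTools
section Canonical

variable {A AP : Type} [Fintype A] [Nonempty AP] {Ax : Form A AP → Prop}

local notation "CM" => canonicalPsm A AP (Prf Ax)

theorem taut_dni (φ : Form A AP) : IsTaut (φ.imp φ.neg.neg) :=
  isTaut_def fun v hv => by simp only [hv.imp_iff, hv.neg_iff]; tauto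

theorem Prf.contrapose {φ ψ : Form A AP} (h : Prf Ax (φ.imp ψ)) :
    Prf Ax (ψ.neg.imp φ.neg) :=
  Prf.mp1 (isTaut_def fun v hv => by simp only [hv.imp_iff, hv.neg_iff]; tauto) h

/-- From `⊢ χ₁ ⇒ χ₂ ⇒ χ₃` and `D_B χ₁, D_B χ₂ ∈ Γ` infer `D_B χ₃ ∈ Γ`. -/
theorem MaxConsistent.dk_mp2 {Γ : Set (Form A AP)} (hΓ : MaxConsistent (Prf Ax) Γ)
    {χ₁ χ₂ χ₃ : Form A AP} (B : Finset A) (hB : B.Nonempty)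
    (h : Prf Ax (χ₁.imp (χ₂.imp χ₃)))
    (h1 : Form.dk B hB χ₁ ∈ Γ) (h2 : Form.dk B hB χ₂ ∈ Γ) : Form.dk B hB χ₃ ∈ Γ := by
  have p1 : Prf Ax ((Form.dk B hB χ₁).imp (Form.dk B hB (χ₂.imp χ₃))) := Prf.dk_mp B hB h
  have p2 := Prf.axK (Ax := Ax) (φ := χ₂) (ψ := χ₃) B hB
  exact hΓ.mp (hΓ.mp (hΓ.mem_of_prf p2) (hΓ.mp (hΓ.mem_of_prf p1) h1)) h2

theorem crel_symm {B : Finset A} {Γ Δ : {Γ : Set (Form A AP) // MaxConsistent (Prf Ax) Γ}}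
    (h : (CM).rel B Γ Δ) : (CM).rel B Δ Γ := by
  intro hB φ hφ
  by_contra hφΓ
  have hn : φ.neg ∈ Γ.1 := Γ.2.neg_mem_iff.mpr hφΓ
  have h1 : Form.dk B hB (Form.neg (Form.dk B hB φ.neg.neg)) ∈ Γ.1 :=
    Γ.2.mp (Γ.2.mem_of_prf (Prf.axB B hB)) hn
  have h2 : Form.neg (Form.dk B hB φ.neg.neg) ∈ Δ.1 := h hB _ h1
  have h3 : Form.dk B hB φ.neg.neg ∈ Δ.1 :=
    Δ.2.mp (Δ.2.mem_of_prf (Prf.dk_mp B hB (Prf.taut (taut_dni φ)))) hφ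
  exact Δ.2.falsum_not_mem (Δ.2.mp2 (isTaut_def fun v hv => by
    simp only [hv.imp_iff, hv.neg_iff]; tauto) h2 h3)

theorem crel_trans {B : Finset A} {Γ Δ Θ : {Γ : Set (Form A AP) // MaxConsistent (Prf Ax) Γ}}
    (h1 : (CM).rel B Γ Δ) (h2 : (CM).rel B Δ Θ) : (CM).rel B Γ Θ := by
  intro hB φ hφ
  exact h2 hB φ (h1 hB _ (Γ.2.mp (Γ.2.mem_of_prf (Prf.ax4 B hB)) hφ))

theorem crel_anti {B B' : Finset A} (hB : B.Nonempty) (hsub : B ⊆ B')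
    {Γ Δ : {Γ : Set (Form A AP) // MaxConsistent (Prf Ax) Γ}}
    (h : (CM).rel B' Γ Δ) : (CM).rel B Γ Δ := by
  have hB' : B'.Nonempty := hB.mono hsub
  intro hB'' φ hφ
  exact h hB' φ (Γ.2.mp (Γ.2.mem_of_prf (Prf.axMono B B' hB'' hB' hsub)) hφ)

theorem alive_of_crel_self {B : Finset A} (hB : B.Nonempty)
    {Γ : {Γ : Set (Form A AP) // MaxConsistent (Prf Ax) Γ}}
    (h : (CM).rel B Γ Γ) : Form.aliveGrp B hB ∈ Γ.1 := by
  refine Γ.2.neg_mem_iff.mpr fun hmem => ?_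
  exact Γ.2.falsum_not_mem (h hB _ hmem)

theorem crel_self_of_alive {B : Finset A} (hB : B.Nonempty)
    {Γ : {Γ : Set (Form A AP) // MaxConsistent (Prf Ax) Γ}}
    (h : Form.aliveGrp B hB ∈ Γ.1) : (CM).rel B Γ Γ := by
  intro hB' ψ hψ
  by_contra hψΓ
  have hn : ψ.neg ∈ Γ.1 := Γ.2.neg_mem_iff.mpr hψΓ
  have h1 : Form.dk B hB' (Form.neg (Form.dk B hB' ψ.neg.neg)) ∈ Γ.1 :=
    Γ.2.mp (Γ.2.mem_of_prf (Prf.axB B hB')) hn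
  have h2 : Form.dk B hB' (Form.neg (Form.dk B hB' ψ)) ∈ Γ.1 :=
    Γ.2.mp (Γ.2.mem_of_prf (Prf.dk_mp B hB'
      (Prf.contrapose (Prf.dk_mp B hB' (Prf.taut (taut_dni ψ)))))) h1
  have h3 : Form.dk B hB' (Form.dk B hB' ψ) ∈ Γ.1 :=
    Γ.2.mp (Γ.2.mem_of_prf (Prf.ax4 B hB')) hψ
  have h4 : Form.dk B hB' Form.falsum ∈ Γ.1 :=
    Γ.2.dk_mp2 B hB' (Prf.taut (isTaut_def fun v hv => by
      simp only [hv.imp_iff, hv.neg_iff]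
      intro a b; exact absurd a b)) h3 h2
  exact (Γ.2.neg_mem_iff.mp h) h4

theorem crel_union_self {B B' : Finset A} (hB : B.Nonempty) (hB' : B'.Nonempty)
    {Γ : {Γ : Set (Form A AP) // MaxConsistent (Prf Ax) Γ}}
    (h1 : (CM).rel B Γ Γ) (h2 : (CM).rel B' Γ Γ) : (CM).rel (B ∪ B') Γ Γ := by
  apply crel_self_of_alive (unionNE hB)
  have ha1 := alive_of_crel_self hB h1
  have ha2 := alive_of_crel_self hB' h2
  have hand : (Form.aliveGrp B hB).and (Form.aliveGrp B' hB') ∈ Γ.1 :=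
    Γ.2.and_mem_iff.mpr ⟨ha1, ha2⟩
  exact Γ.2.mp (Γ.2.mem_of_prf (Prf.axUnion B B' hB hB')) hand

theorem crel_bunion_self {B : Finset A} (hB : B.Nonempty)
    {Γ : {Γ : Set (Form A AP) // MaxConsistent (Prf Ax) Γ}}
    (h : ∀ a ∈ B, (CM).rel {a} Γ Γ) : (CM).rel B Γ Γ := by
  induction B using Finset.induction_on with
  | empty => exact absurd hB (by simp)
  | insert _ _ hnot =>
    rename_i a s ih
    rcases Finset.eq_empty_or_nonempty s with hs | hs
    · subst hs
      simpa using h a (by simp)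
    · have h1 : (CM).rel {a} Γ Γ := h a (Finset.mem_insert_self a s)
      have h2 : (CM).rel s Γ Γ := ih hs fun b hb => h b (Finset.mem_insert_of_mem hb)
      have := crel_union_self (Finset.singleton_nonempty a) hs h1 h2
      rwa [← Finset.insert_eq] at this
  
theorem dk_bigAnd_mem {B : Finset A} (hB : B.Nonempty)
    {Γ : {Γ : Set (Form A AP) // MaxConsistent (Prf Ax) Γ}} {L : List (Form A AP)}
    (h : ∀ γ ∈ L, Form.dk B hB γ ∈ Γ.1) : Form.dk B hB (Form.bigAnd L) ∈ Γ.1 := by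
  induction L with
  | nil =>
    exact Γ.2.mem_of_prf (Prf.nec B hB (Prf.taut (isTaut_def fun v hv => hv.verum_iff)))
  | cons γ t ih =>
    have h1 := h γ (List.mem_cons_self)
    have h2 := ih fun δ hδ => h δ (List.mem_cons_of_mem _ hδ)
    exact Γ.2.dk_mp2 B hB (Prf.taut (isTaut_def fun v hv => by
      simp only [Form.bigAnd, hv.imp_iff, hv.and_iff]; tauto)) h1 h2

/-- Existence lemma: if `D_B ψ ∉ Γ` there is a `∼_B`-successor `Δ` with `ψ ∉ Δ`. -/
theorem crel_witness {B : Finset A} (hB : B.Nonempty)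
    {Γ : {Γ : Set (Form A AP) // MaxConsistent (Prf Ax) Γ}} {ψ : Form A AP}
    (h : Form.dk B hB ψ ∉ Γ.1) :
    ∃ Δ : {Γ : Set (Form A AP) // MaxConsistent (Prf Ax) Γ}, (CM).rel B Γ Δ ∧ ψ ∉ Δ.1 := by
  set S : Set (Form A AP) := {χ | Form.dk B hB χ ∈ Γ.1} with hS
  have hcons : ConsistentSet (Prf Ax) (insert ψ.neg S) := by
    apply consistent_insert_of_not_provesFrom
    rintro ⟨L, hL, p⟩
    apply h
    have p' : Prf Ax ((Form.bigAnd L).imp ψ) := Prf.mp1 (isTaut_def fun v hv => by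
      simp only [hv.imp_iff, hv.neg_iff]; tauto) p
    have hbig : Form.dk B hB (Form.bigAnd L) ∈ Γ.1 := dk_bigAnd_mem hB fun γ hγ => hL γ hγ
    exact Γ.2.mp (Γ.2.mem_of_prf (Prf.dk_mp B hB p')) hbig
  obtain ⟨Δ, hsub, hΔ⟩ := lindenbaum hcons
  refine ⟨⟨Δ, hΔ⟩, fun hB' χ hχ => ?_, ?_⟩
  · exact hsub (Set.mem_insert_of_mem _ hχ)
  · exact fun hmem => (hΔ.neg_mem_iff.mp (hsub (Set.mem_insert _ _))) hmem

/-- Truth lemma for the canonical pseudo-model. -/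
theorem canonical_truth (ψ : Form A AP) :
    ∀ Γ : {Γ : Set (Form A AP) // MaxConsistent (Prf Ax) Γ},
      (CM).sat Γ ψ ↔ ψ ∈ Γ.1 := by
  induction ψ with
  | atom p => intro Γ; rfl
  | neg ψ ih =>
    intro Γ
    rw [PseudoData.sat, ih Γ, Γ.2.neg_mem_iff]
  | and ψ χ ih1 ih2 =>
    intro Γ
    rw [PseudoData.sat, ih1 Γ, ih2 Γ, Γ.2.and_mem_iff]
  | dk B hB ψ ih =>
    intro Γ
    constructor
    · intro hsat
      by_contra hmem
      obtain ⟨Δ, hrel, hψ⟩ := crel_witness hB hmem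
      exact hψ ((ih Δ).mp (hsat Δ hrel))
    · intro hmem Δ hrel
      exact (ih Δ).mpr (hrel hB ψ hmem)

/-- Every maximal consistent set has an alive agent. -/
theorem exists_alive (Γ : {Γ : Set (Form A AP) // MaxConsistent (Prf Ax) Γ}) :
    ∃ a : A, (CM).rel {a} Γ Γ := by
  have hNE := Γ.2.mem_of_prf (Prf.axNE (Ax := Ax))
  obtain ⟨γ, hγL, hγΓ⟩ := Γ.2.bigOr_elim hNE
  obtain ⟨a, _, rfl⟩ := List.mem_map.mp hγL
  exact ⟨a, crel_self_of_alive (Finset.singleton_nonempty a) hγΓ⟩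

end Canonical
section HistTools

variable {A AP W : Type}

/-- The final world reached from `w` through the steps `t`. -/
def lastFrom (w : W) (t : List (Finset A × W)) : W := (t.map Prod.snd).getLastD w

theorem lastFrom_nil (w : W) : lastFrom (A := A) w [] = w := rfl

theorem lastFrom_cons (w : W) (e : Finset A × W) (t : List (Finset A × W)) :
    lastFrom w (e :: t) = lastFrom e.2 t := by
  rw [lastFrom, lastFrom, List.map_cons, List.getLastD_cons]

theorem lastFrom_append (w : W) (s t : List (Finset A × W)) :
    lastFrom w (s ++ t) = lastFrom (lastFrom w s) t := by
  induction s generalizing w with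
  | nil => simp [lastFrom_nil]
  | cons e s ih => rw [List.cons_append, lastFrom_cons, lastFrom_cons, ih]

variable {M : PseudoData A AP W}

theorem Hist.last_def (h : Hist M) : h.last = lastFrom h.first h.steps := rfl

theorem isHist_append_s15 {w : W} {s t : List (Finset A × W)} :
    IsHist M w (s ++ t) ↔ IsHist M w s ∧ IsHist M (lastFrom w s) t := by
  induction s generalizing w with
  | nil => simp [IsHist, lastFrom_nil]
  | cons e s ih =>
    obtain ⟨B, w'⟩ := e
    simp only [List.cons_append, IsHist, lastFrom_cons, ih, and_assoc, List.append_eq]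

/-- Extending a history by one step. -/
def Hist.ext (h : Hist M) (B : Finset A) (w : W) (hrel : M.rel B h.last w) : Hist M :=
  ⟨h.first, h.steps ++ [(B, w)], by
    rw [isHist_append_s15]
    exact ⟨h.valid, hrel, trivial⟩⟩

theorem Hist.ext_last (h : Hist M) (B : Finset A) (w : W) (hrel : M.rel B h.last w) :
    (h.ext B w hrel).last = w := by
  show lastFrom h.first (h.steps ++ [(B, w)]) = w
  rw [lastFrom_append]; rfl

theorem Hist.ext_step (h : Hist M) {a : A} {B : Finset A} (haB : a ∈ B) (w : W)
    (hrel : M.rel B h.last w) : histStep M a h (h.ext B w hrel) :=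
  ⟨B, w, haB, rfl, rfl⟩

theorem histRel_symm {a : A} {h h' : Hist M} (hr : histRel M a h h') : histRel M a h' h := by
  induction hr with
  | single hs => exact Relation.TransGen.single hs.symm
  | tail _ hs ih => exact Relation.TransGen.head hs.symm ih

theorem histRel_trans {a : A} {h₁ h₂ h₃ : Hist M} (r1 : histRel M a h₁ h₂)
    (r2 : histRel M a h₂ h₃) : histRel M a h₁ h₃ := Relation.TransGen.trans r1 r2

/-- `m` is an ancestor of `h` all of whose further steps involve `a`. -/
def anc (a : A) (m h : Hist M) : Prop :=
  h.first = m.first ∧ ∃ t, h.steps = m.steps ++ t ∧ ∀ e ∈ t, a ∈ e.1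

theorem anc_refl (a : A) (h : Hist M) : anc a h h := ⟨rfl, [], by simp, by simp⟩

theorem anc_of_step {a : A} {h h' : Hist M} (hs : histStep M a h h') : anc a h h' := by
  obtain ⟨B, w, haB, hfirst, hsteps⟩ := hs
  exact ⟨hfirst, [(B, w)], hsteps, by simpa using haB⟩

theorem anc_prefix {a : A} {m h : Hist M} (hm : anc a m h) : m.steps <+: h.steps := by
  obtain ⟨_, t, ht, _⟩ := hm
  exact ⟨t, ht.symm⟩

/-- Shrinking the common ancestor. -/
theorem anc_shrink {a : A} {m m' y : Hist M} (hm : anc a m y) (hm' : anc a m' y)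
    (hp : m.steps <+: m'.steps) : ∀ {w : Hist M}, anc a m' w → anc a m w := by
  obtain ⟨hf1, t, ht, hta⟩ := hm
  obtain ⟨hf2, s, hs, _⟩ := hm'
  obtain ⟨u, hu⟩ := hp
  have htu : t = u ++ s := by
    apply List.append_cancel_left (as := m.steps)
    rw [← ht, hs, ← hu, List.append_assoc]
  have hua : ∀ e ∈ u, a ∈ e.1 := fun e he => hta e (htu ▸ List.mem_append_left _ he)
  rintro w ⟨hfw, r, hr, hra⟩
  refine ⟨by rw [hfw, ← hf2, hf1], u ++ r, ?_, ?_⟩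
  · rw [hr, ← hu, List.append_assoc]
  · intro e he
    rcases List.mem_append.mp he with h | h
    exacts [hua e h, hra e h]

/-- Growing the common ancestor below a fixed history. -/
theorem anc_grow {a : A} {m m' h : Hist M} (h1 : anc a m h) (hfirst : h.first = m'.first)
    (hp : m.steps <+: m'.steps) (hp' : m'.steps <+: h.steps) : anc a m' h := by
  obtain ⟨hf, t, ht, hta⟩ := h1
  obtain ⟨u, hu⟩ := hp
  obtain ⟨r, hr⟩ := hp'
  have htr : t = u ++ r := by
    apply List.append_cancel_left (as := m.steps)
    rw [← ht, ← hr, ← hu, List.append_assoc]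
  refine ⟨hfirst, r, hr.symm, fun e he => hta e (htr ▸ List.mem_append_right _ he)⟩

/-- Any two `∼^U_a`-related histories have a common ancestor with `a`-steps. -/
theorem histRel_meet {a : A} {h h' : Hist M} (hr : histRel M a h h') :
    ∃ m : Hist M, anc a m h ∧ anc a m h' := by
  induction hr with
  | single hs =>
    rcases hs with hs | hs
    · exact ⟨_, anc_refl a _, anc_of_step hs⟩
    · exact ⟨_, anc_of_step hs, anc_refl a _⟩
  | tail _ hs ih =>
    rename_i y z _
    obtain ⟨m₁, a1x, a1y⟩ := ih
    have h2 : ∃ m₂ : Hist M, anc a m₂ y ∧ anc a m₂ z := by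
      rcases hs with hs | hs
      · exact ⟨_, anc_refl a _, anc_of_step hs⟩
      · exact ⟨_, anc_of_step hs, anc_refl a _⟩
    obtain ⟨m₂, a2y, a2z⟩ := h2
    rcases List.prefix_or_prefix_of_prefix (anc_prefix a1y) (anc_prefix a2y) with hp | hp
    · exact ⟨m₁, a1x, anc_shrink a1y a2y hp a2z⟩
    · exact ⟨m₂, anc_shrink a2y a1y hp a1x, a2z⟩

/-- A common ancestor for a whole group of agents. -/
theorem histRel_group_meet {B : Finset A} (hB : B.Nonempty) {h h' : Hist M}
    (hr : ∀ a ∈ B, histRel M a h h') :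
    ∃ m : Hist M, ∀ a ∈ B, anc a m h ∧ anc a m h' := by
  have hex : ∀ a ∈ B, ∃ m : Hist M, anc a m h ∧ anc a m h' :=
    fun a ha => histRel_meet (hr a ha)
  classical
  set F : A → Hist M := fun a =>
    if hc : ∃ m : Hist M, anc a m h ∧ anc a m h' then hc.choose else h with hF
  have hFspec : ∀ a ∈ B, anc a (F a) h ∧ anc a (F a) h' := by
    intro a ha
    have hc := hex a ha
    simp only [hF, dif_pos hc]
    exact hc.choose_spec
  obtain ⟨a₀, ha₀, hmax⟩ := B.exists_max_image (fun a => (F a).steps.length) hB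
  refine ⟨F a₀, fun a ha => ?_⟩
  have hpa : (F a).steps <+: (F a₀).steps :=
    List.prefix_of_prefix_length_le (anc_prefix (hFspec a ha).1)
      (anc_prefix (hFspec a₀ ha₀).1) (hmax a ha)
  exact ⟨anc_grow (hFspec a ha).1 (hFspec a₀ ha₀).1.1 hpa (anc_prefix (hFspec a₀ ha₀).1),
    anc_grow (hFspec a ha).2 (hFspec a₀ ha₀).2.1 hpa (anc_prefix (hFspec a₀ ha₀).2)⟩

section PseudoProps

variable (hsym : ∀ B : Finset A, Symmetric (M.rel B))
variable (htrans : ∀ B : Finset A, Transitive (M.rel B))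
variable (hanti : ∀ B B' : Finset A, B ⊆ B' → ∀ w w' : W, M.rel B' w w' → M.rel B w w')

include hsym htrans hanti

/-- Chaining a history whose steps all involve a whole group `B`. -/
theorem rel_of_chain {B : Finset A} :
    ∀ (t : List (Finset A × W)) (w : W), IsHist M w t → (∀ e ∈ t, B ⊆ e.1) →
      w = lastFrom w t ∨ M.rel B w (lastFrom w t) := by
  intro t
  induction t with
  | nil => intro w _ _; left; rfl
  | cons e t ih =>
    rintro w ⟨hrel, hh⟩ hsub
    rw [lastFrom_cons]
    have h1 : M.rel B w e.2 :=
      hanti B e.1 (hsub e (List.mem_cons_self)) w e.2 hrel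
    rcases ih e.2 hh (fun e' he' => hsub e' (List.mem_cons_of_mem _ he')) with h | h
    · right; rw [← h]; exact h1
    · right; exact htrans B h1 h

/-- Loop lemma: `h ∼^U_a h''` gives a reflexive `{a}`-loop at `last h`. -/
theorem rel_single_self_of_histRel {a : A} {h h'' : Hist M} (hr : histRel M a h h'') :
    M.rel {a} h.last h.last := by
  have hfirst : ∃ z : Hist M, histStep M a h z ∨ histStep M a z h := by
    induction hr with
    | single hs => exact ⟨_, hs⟩
    | tail _ _ ih => exact ih
  obtain ⟨z, hz | hz⟩ := hfirst
  · obtain ⟨B, w, haB, hf, hsteps⟩ := hz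
    have hv := z.valid
    rw [hsteps, isHist_append_s15, hf] at hv
    have hrel : M.rel B h.last w := hv.2.1
    exact hanti {a} B (Finset.singleton_subset_iff.mpr haB) _ _
      (htrans B hrel (hsym B hrel))
  · obtain ⟨B, w, haB, hf, hsteps⟩ := hz
    have hv := h.valid
    rw [hsteps, isHist_append_s15] at hv
    have hrel := hv.2.1
    have hlast : h.last = w := by
      rw [Hist.last_def, hsteps, lastFrom_append]; rfl
    rw [hlast]
    exact hanti {a} B (Finset.singleton_subset_iff.mpr haB) _ _
      (htrans B (hsym B hrel) hrel)

variable (hun : ∀ (B : Finset A) (w : W), B.Nonempty →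
  (∀ a ∈ B, M.rel {a} w w) → M.rel B w w)

include hun

/-- Path lemma: if `h ∼^U_a h'` for every `a ∈ B` then `last h ∼_B last h'`. -/
theorem rel_of_histRel_group {B : Finset A} (hB : B.Nonempty) {h h' : Hist M}
    (hr : ∀ a ∈ B, histRel M a h h') : M.rel B h.last h'.last := by
  obtain ⟨m, hm⟩ := histRel_group_meet hB hr
  obtain ⟨a₀, ha₀⟩ := hB
  obtain ⟨hf, t, ht, _⟩ := (hm a₀ ha₀).1
  obtain ⟨hf', t', ht', _⟩ := (hm a₀ ha₀).2
  have htB : ∀ e ∈ t, B ⊆ e.1 := by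
    intro e he a ha
    obtain ⟨_, ta, hta, haa⟩ := (hm a ha).1
    have : ta = t := List.append_cancel_left (by rw [← hta, ← ht])
    exact haa e (this ▸ he)
  have htB' : ∀ e ∈ t', B ⊆ e.1 := by
    intro e he a ha
    obtain ⟨_, ta, hta, haa⟩ := (hm a ha).2
    have : ta = t' := List.append_cancel_left (by rw [← hta, ← ht'])
    exact haa e (this ▸ he)
  have hvt : IsHist M m.last t := by
    have hv := h.valid
    rw [ht, hf, isHist_append_s15] at hv
    exact hv.2
  have hvt' : IsHist M m.last t' := by
    have hv := h'.valid
    rw [ht', hf', isHist_append_s15] at hv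
    exact hv.2
  have hlt : h.last = lastFrom m.last t := by
    rw [Hist.last_def, ht, hf, lastFrom_append]; rfl
  have hlt' : h'.last = lastFrom m.last t' := by
    rw [Hist.last_def, ht', hf', lastFrom_append]; rfl
  rcases rel_of_chain hsym htrans hanti t m.last hvt htB with h1 | h1 <;>
    rcases rel_of_chain hsym htrans hanti t' m.last hvt' htB' with h2 | h2
  · -- degenerate: h.last = m.last = h'.last
    rw [hlt, ← h1, hlt', ← h2]
    exact hun B m.last ⟨a₀, ha₀⟩ fun a ha =>
      (h1 ▸ hlt ▸ rel_single_self_of_histRel hsym htrans hanti (hr a ha))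
  · rw [hlt, ← h1, hlt']; exact h2
  · rw [hlt', ← h2, hlt]; exact hsym B h1
  · rw [hlt, hlt']; exact htrans B (hsym B h1) h2

end PseudoProps

theorem histRel_self_of_rel {a : A} {h : Hist M} (hrel : M.rel {a} h.last h.last) :
    histRel M a h h := by
  have hstep := h.ext_step (B := {a}) (Finset.mem_singleton_self a) h.last hrel
  exact Relation.TransGen.tail (Relation.TransGen.single (Or.inl hstep)) (Or.inr hstep)

end HistTools
section UnravelTools

variable {A AP W : Type} {M : PseudoData A AP W}

theorem unravel_isPE : (unravel M).IsPE := fun _a =>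
  ⟨fun _ _ => histRel_symm, fun _ _ _ => histRel_trans⟩

variable (hsym : ∀ B : Finset A, Symmetric (M.rel B))
variable (htrans : ∀ B : Finset A, Transitive (M.rel B))
variable (hanti : ∀ B B' : Finset A, B ⊆ B' → ∀ w w' : W, M.rel B' w w' → M.rel B w w')
variable (hun : ∀ (B : Finset A) (w : W), B.Nonempty →
  (∀ a ∈ B, M.rel {a} w w) → M.rel B w w)

include hsym htrans hanti hun

/-- Truth transfer between the unravelling and the pseudo-model. -/
theorem unravel_truth (ψ : Form A AP) :
    ∀ h : Hist M, (unravel M).sat h ψ ↔ M.sat h.last ψ := by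
  induction ψ with
  | atom p => intro h; rfl
  | neg ψ ih => intro h; rw [PEData.sat, PseudoData.sat, ih h]
  | and ψ χ ih1 ih2 => intro h; rw [PEData.sat, PseudoData.sat, ih1 h, ih2 h]
  | dk B hB ψ ih =>
    intro h
    constructor
    · intro hsat w' hrel
      have h' := h.ext B w' hrel
      have hs : ∀ a ∈ B, (unravel M).rel a h (h.ext B w' hrel) := fun a ha =>
        Relation.TransGen.single (Or.inl (h.ext_step ha w' hrel))
      have := hsat (h.ext B w' hrel) hs
      rw [ih, h.ext_last] at this
      exact this
    · intro hsat h' hrel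
      rw [ih]
      exact hsat h'.last (rel_of_histRel_group hsym htrans hanti hun hB hrel)

end UnravelTools

section ProperifyTools

variable {A AP W : Type} {M : PEData A AP W} (hpe : M.IsPE)

include hpe

theorem rel_self_left {a : A} {w w' : W} (h : M.rel a w w') : M.rel a w w :=
  (hpe a).2 h ((hpe a).1 h)

theorem rel_self_right {a : A} {w w' : W} (h : M.rel a w w') : M.rel a w' w' :=
  (hpe a).2 ((hpe a).1 h) h

theorem pequiv_equivalence : Equivalence (pequiv M) := by
  refine ⟨fun w => ⟨rfl, fun a ha => ha⟩, ?_, ?_⟩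
  · rintro w w' ⟨h1, h2⟩
    exact ⟨h1.symm, fun a ha => (hpe a).1 (h2 a (h1 ▸ ha))⟩
  · rintro w w' w'' ⟨h1, h2⟩ ⟨h3, h4⟩
    exact ⟨h1.trans h3, fun a ha => (hpe a).2 (h2 a ha) (h4 a (h1 ▸ ha))⟩

theorem pequiv_quot_eq {w w' : W} :
    Quot.mk (pequiv M) w = Quot.mk (pequiv M) w' ↔ pequiv M w w' := by
  rw [Quot.eq]
  exact Equivalence.eqvGen_iff (pequiv_equivalence hpe)

theorem rel_compat_left {a : A} {u w v : W} (he : pequiv M u w) (h : M.rel a u v) :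
    M.rel a w v := by
  have ha : a ∈ M.live u := rel_self_left hpe h
  exact (hpe a).2 ((hpe a).1 (he.2 a ha)) h

theorem prel_iff {a : A} {w v : W} :
    (properify M).rel a (Quot.mk (pequiv M) w) (Quot.mk (pequiv M) v) ↔ M.rel a w v := by
  constructor
  · rintro ⟨u, u', hqu, hqu', hrel⟩
    have he1 : pequiv M u w := (pequiv_quot_eq hpe).mp hqu.symm
    have he2 : pequiv M u' v := (pequiv_quot_eq hpe).mp hqu'.symm
    have h1 : M.rel a w u' := rel_compat_left hpe he1 hrel
    have ha : a ∈ M.live u' := rel_self_right hpe h1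
    exact (hpe a).2 h1 (he2.2 a ha)
  · intro h
    exact ⟨w, v, rfl, rfl, h⟩

variable (hlab : ∀ w w' : W, pequiv M w w' → M.label w = M.label w')

include hlab in
theorem plabel_eq (w : W) : (properify M).label (Quot.mk (pequiv M) w) = M.label w := by
  ext p
  constructor
  · rintro ⟨u, hq, hp⟩
    rw [hlab w u ((pequiv_quot_eq hpe).mp hq)]
    exact hp
  · intro hp
    exact ⟨w, rfl, hp⟩

include hlab

theorem properify_sat (ψ : Form A AP) :
    ∀ w : W, (properify M).sat (Quot.mk (pequiv M) w) ψ ↔ M.sat w ψ := by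
  induction ψ with
  | atom p =>
    intro w
    show p ∈ (properify M).label _ ↔ _
    rw [plabel_eq hpe hlab]
    rfl
  | neg ψ ih => intro w; rw [PEData.sat, PEData.sat, ih w]
  | and ψ χ ih1 ih2 => intro w; rw [PEData.sat, PEData.sat, ih1 w, ih2 w]
  | dk B hB ψ ih =>
    intro w
    constructor
    · intro hsat v hrel
      rw [← ih v]
      exact hsat (Quot.mk _ v) fun a ha => (prel_iff hpe).mpr (hrel a ha)
    · intro hsat x hrel
      obtain ⟨v, rfl⟩ := Quot.exists_rep x
      rw [ih v]
      exact hsat v fun a ha => (prel_iff hpe).mp (hrel a ha)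

omit hlab

theorem properify_isPE : (properify M).IsPE := by
  intro a
  constructor
  · rintro x y ⟨u, u', h1, h2, hrel⟩
    exact ⟨u', u, h2, h1, (hpe a).1 hrel⟩
  · rintro x y z h1 h2
    obtain ⟨u, rfl⟩ := Quot.exists_rep x
    obtain ⟨v, rfl⟩ := Quot.exists_rep y
    obtain ⟨t, rfl⟩ := Quot.exists_rep z
    exact (prel_iff hpe).mpr ((hpe a).2 ((prel_iff hpe).mp h1) ((prel_iff hpe).mp h2))

theorem properify_live (w : W) :
    (properify M).live (Quot.mk (pequiv M) w) = M.live w := by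
  ext a
  exact prel_iff hpe

theorem properify_noEmpty (hne : M.NoEmptyWorld) : (properify M).NoEmptyWorld := by
  intro x
  obtain ⟨u, rfl⟩ := Quot.exists_rep x
  obtain ⟨a, ha⟩ := hne u
  exact ⟨a, (prel_iff hpe).mpr ha⟩

theorem properify_proper : (properify M).Proper := by
  intro x y hxy hlive
  obtain ⟨u, rfl⟩ := Quot.exists_rep x
  obtain ⟨v, rfl⟩ := Quot.exists_rep y
  have hne : ¬ pequiv M u v := fun h => hxy ((pequiv_quot_eq hpe).mpr h)
  rw [properify_live hpe, properify_live hpe] at hlive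
  have : ∃ a ∈ M.live u, ¬ M.rel a u v := by
    by_contra hc
    push_neg at hc
    exact hne ⟨hlive, hc⟩
  obtain ⟨a, ha, hnr⟩ := this
  refine ⟨a, ?_, fun h => hnr ((prel_iff hpe).mp h)⟩
  rw [properify_live hpe]
  exact ha

end ProperifyTools
section Assembly

variable {A AP : Type} [Fintype A] [Nonempty AP] {Ax : Form A AP → Prop}

local notation "CM" => canonicalPsm A AP (Prf Ax)

theorem cm_sym : ∀ B : Finset A, Symmetric ((CM).rel B) :=
  fun _ _ _ h => crel_symm h

theorem cm_trans : ∀ B : Finset A, Transitive ((CM).rel B) :=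
  fun _ _ _ _ h1 h2 => crel_trans h1 h2

theorem cm_anti : ∀ B B' : Finset A, B ⊆ B' →
    ∀ Γ Δ : {Γ : Set (Form A AP) // MaxConsistent (Prf Ax) Γ},
      (CM).rel B' Γ Δ → (CM).rel B Γ Δ :=
  fun B B' hsub Γ Δ h hB ψ hψ => crel_anti hB hsub h hB ψ hψ

theorem cm_un : ∀ (B : Finset A) (Γ : {Γ : Set (Form A AP) // MaxConsistent (Prf Ax) Γ}),
    B.Nonempty → (∀ a ∈ B, (CM).rel {a} Γ Γ) → (CM).rel B Γ Γ :=
  fun B Γ hB h => crel_bunion_self hB h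

theorem ulive_iff {h : Hist (CM)} {a : A} :
    a ∈ (unravel (CM)).live h ↔ (CM).rel {a} h.last h.last := by
  constructor
  · intro ha
    exact rel_single_self_of_histRel cm_sym cm_trans cm_anti ha
  · intro ha
    exact histRel_self_of_rel ha

theorem deadGrp_mem {B : Finset A} {Θ : {Γ : Set (Form A AP) // MaxConsistent (Prf Ax) Γ}}
    (hd : ∀ a ∈ Bᶜ, ¬ (CM).rel {a} Θ Θ) : Form.deadGrp Bᶜ ∈ Θ.1 := by
  apply Θ.2.bigAnd_mem
  intro γ hγ
  obtain ⟨a, haL, rfl⟩ := List.mem_map.mp hγ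
  have ha : a ∈ Bᶜ := Finset.mem_toList.mp haL
  by_contra hmem
  have halive : Form.aliveAgent a ∈ Θ.1 := Θ.2.neg_mem_iff.mpr hmem
  exact hd a ha (crel_self_of_alive (Finset.singleton_nonempty a) halive)

theorem pequiv_subset {h h' : Hist (CM)} (he : pequiv (unravel (CM)) h h') :
    (h.last).1 ⊆ (h'.last).1 := by
  classical
  set Γ := h.last with hΓ
  set Δ := h'.last with hΔ
  set Bs : Finset A := Finset.univ.filter (fun a => (CM).rel {a} Γ Γ) with hBs
  have memB : ∀ a, a ∈ Bs ↔ (CM).rel {a} Γ Γ := by intro a; simp [hBs]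
  have hlive : ∀ a, a ∈ (unravel (CM)).live h ↔ (CM).rel {a} Γ Γ := fun a => ulive_iff
  have hlive' : ∀ a, a ∈ (unravel (CM)).live h' ↔ (CM).rel {a} Δ Δ := fun a => ulive_iff
  obtain ⟨a₀, ha₀⟩ := exists_alive Γ
  have hB : Bs.Nonempty := ⟨a₀, (memB a₀).mpr ha₀⟩
  have hrelB : (CM).rel Bs Γ Δ :=
    rel_of_histRel_group cm_sym cm_trans cm_anti cm_un hB
      (fun a ha => he.2 a ((hlive a).mpr ((memB a).mp ha)))
  have hselfB : (CM).rel Bs Γ Γ := cm_un Bs Γ hB fun a ha => (memB a).mp ha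
  have halive : Form.aliveGrp Bs hB ∈ Γ.1 := alive_of_crel_self hB hselfB
  have hdeadΓ : Form.deadGrp Bsᶜ ∈ Γ.1 :=
    deadGrp_mem fun a ha hrel => (Finset.mem_compl.mp ha) ((memB a).mpr hrel)
  have hdeadΔ : Form.deadGrp Bsᶜ ∈ Δ.1 := by
    refine deadGrp_mem fun a ha hrel => ?_
    have hmem : a ∈ (unravel (CM)).live h' := (hlive' a).mpr hrel
    rw [← he.1] at hmem
    exact (Finset.mem_compl.mp ha) ((memB a).mpr ((hlive a).mp hmem))
  intro φ hφ
  have hconj : ((Form.aliveGrp Bs hB).and (Form.deadGrp Bsᶜ)).and φ ∈ Γ.1 :=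
    Γ.2.and_mem_iff.mpr ⟨Γ.2.and_mem_iff.mpr ⟨halive, hdeadΓ⟩, hφ⟩
  have hdk : Form.dk Bs hB ((Form.deadGrp Bsᶜ).imp φ) ∈ Γ.1 :=
    Γ.2.mp (Γ.2.mem_of_prf (Prf.axP Bs hB)) hconj
  have himp := hrelB hB _ hdk
  exact Δ.2.mp himp hdeadΔ

theorem pequiv_last_eq {h h' : Hist (CM)} (he : pequiv (unravel (CM)) h h') :
    h.last = h'.last :=
  Subtype.ext (Set.Subset.antisymm (pequiv_subset he)
    (pequiv_subset ((pequiv_equivalence unravel_isPE).symm he)))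

theorem ulab : ∀ h h' : Hist (CM), pequiv (unravel (CM)) h h' →
    (unravel (CM)).label h = (unravel (CM)).label h' := by
  intro h h' he
  show (CM).label h.last = (CM).label h'.last
  rw [pequiv_last_eq he]

theorem unravel_noEmpty : (unravel (CM)).NoEmptyWorld := by
  intro h
  obtain ⟨a, ha⟩ := exists_alive h.last
  exact ⟨a, histRel_self_of_rel ha⟩

end Assembly
/-- Completeness of `SC` for partial epistemic models: if `φ` is valid in
every proper partial epistemic model with no empty world, then `φ` is provable in
`SC`. -/
theorem completeness_SC_PE (A AP : Type) [Fintype A] [Nonempty AP] (φ : Form A AP)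
    (hval : ∀ (W : Type) (M : PEData A AP W), M.IsPE → M.Proper → M.NoEmptyWorld →
      ∀ w : W, M.sat w φ) :
    SC φ := by
  by_contra hSC
  have hcons : ConsistentSet (Prf (fun _ : Form A AP => False)) {Form.neg φ} := by
    rintro ⟨L, hL, p⟩
    refine hSC (Prf.mp1 (isTaut_def fun v hv => ?_) p)
    simp only [hv.imp_iff, hv.bigAnd_iff]
    intro hL'
    by_contra hφ
    refine hv.falsum_iff (hL' fun γ hγ => ?_)
    rw [Set.mem_singleton_iff.mp (hL γ hγ), hv.neg_iff]
    exact hφ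
  obtain ⟨Δ, hsubΔ, hΔ⟩ := lindenbaum hcons
  have hφΔ : φ ∉ Δ := hΔ.neg_mem_iff.mp (hsubΔ rfl)
  let Γs : {Γ : Set (Form A AP) // MaxConsistent (Prf (fun _ : Form A AP => False)) Γ} :=
    ⟨Δ, hΔ⟩
  let h₀ : Hist (canonicalPsm A AP (Prf (fun _ : Form A AP => False))) := ⟨Γs, [], trivial⟩
  have hsat := hval _
    (properify (unravel (canonicalPsm A AP (Prf (fun _ : Form A AP => False)))))
    (properify_isPE unravel_isPE) (properify_proper unravel_isPE)
    (properify_noEmpty unravel_isPE unravel_noEmpty) (Quot.mk _ h₀)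
  rw [properify_sat unravel_isPE ulab φ h₀] at hsat
  rw [unravel_truth cm_sym cm_trans cm_anti cm_un φ h₀] at hsat
  rw [canonical_truth φ h₀.last] at hsat
  exact hφΔ hsat
end

section
/- Completeness of SC for simplicial models: if a formula φ of L_D is valid in every (generalized) simplicial model (i.e., C,w ⊨ φ for every simplicial model C and every world w of C), then φ is provable in the proof system SC. -/
attribute [local instance] Classical.propDecidable

/-! ### Auxiliary development for completeness -/

namespace Compl

open Form

section TautKit

variable {A AP : Type}

/-- valuation respecting the Boolean structure -/
def Resp (v : Form A AP → Prop) : Prop :=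
  (∀ ψ : Form A AP, v ψ.neg ↔ ¬ v ψ) ∧ (∀ ψ χ : Form A AP, v (ψ.and χ) ↔ (v ψ ∧ v χ))

lemma Resp.vor {v : Form A AP → Prop} (h : Resp v) (φ ψ : Form A AP) :
    v (φ.or ψ) ↔ (v φ ∨ v ψ) := by
  unfold Form.or; rw [h.1, h.2, h.1, h.1]; tauto

lemma Resp.vimp {v : Form A AP → Prop} (h : Resp v) (φ ψ : Form A AP) :
    v (φ.imp ψ) ↔ (v φ → v ψ) := by
  unfold Form.imp; rw [h.vor, h.1]; tauto

lemma Resp.vverum [Nonempty AP] {v : Form A AP → Prop} (h : Resp v) : v verum := by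
  unfold Form.verum; rw [h.vor, h.1]; tauto

lemma Resp.vfalsum [Nonempty AP] {v : Form A AP → Prop} (h : Resp v) : ¬ v falsum := by
  unfold Form.falsum; rw [h.1]; exact fun hh => hh h.vverum

lemma isTaut_iff {φ : Form A AP} : IsTaut φ ↔ ∀ v, Resp v → v φ := by
  constructor
  · intro h v hv; exact h v hv.1 hv.2
  · intro h v h1 h2; exact h v ⟨h1, h2⟩

end TautKit

section Kit

variable {A AP : Type} [Fintype A] [Nonempty AP] {Ax : Form A AP → Prop}

lemma prfTaut {φ : Form A AP} (h : ∀ v : Form A AP → Prop, Resp v → v φ) : Prf Ax φ :=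
  Prf.taut (isTaut_iff.2 h)

lemma prfImpSelf (φ : Form A AP) : Prf Ax (φ.imp φ) :=
  prfTaut (fun v hv => (hv.vimp _ _).2 id)

lemma prfCompose {X Y Z : Form A AP} (h1 : Prf Ax (X.imp Y)) (h2 : Prf Ax (Y.imp Z)) :
    Prf Ax (X.imp Z) := by
  have t : Prf Ax ((X.imp Y).imp ((Y.imp Z).imp (X.imp Z))) :=
    prfTaut (fun v hv => by
      rw [hv.vimp, hv.vimp, hv.vimp, hv.vimp, hv.vimp]; tauto)
  exact (t.mp h1).mp h2

lemma prfOfImpOf {X Y : Form A AP} (h : Prf Ax Y) : Prf Ax (X.imp Y) := by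
  have t : Prf Ax (Y.imp (X.imp Y)) :=
    prfTaut (fun v hv => by rw [hv.vimp, hv.vimp]; tauto)
  exact t.mp h

/-- bigAnd projections -/
lemma prfBigAndMem {L : List (Form A AP)} {γ : Form A AP} (hγ : γ ∈ L) :
    Prf Ax ((Form.bigAnd L).imp γ) := by
  induction L with
  | nil => cases hγ
  | cons φ t ih =>
    rcases List.mem_cons.mp hγ with h | h
    · subst h
      exact prfTaut (fun v hv => by
        show v ((Form.bigAnd (γ :: t)).imp γ)
        rw [hv.vimp]; unfold Form.bigAnd; rw [hv.2]; tauto)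
    · have step : Prf Ax ((Form.bigAnd (φ :: t)).imp (Form.bigAnd t)) :=
        prfTaut (fun v hv => by
          rw [hv.vimp]; show v ((φ.and (Form.bigAnd t))) → _; rw [hv.2]; tauto)
      exact prfCompose step (ih h)

lemma prfBigAndIntro {X : Form A AP} {L : List (Form A AP)}
    (h : ∀ γ ∈ L, Prf Ax (X.imp γ)) : Prf Ax (X.imp (Form.bigAnd L)) := by
  induction L with
  | nil =>
    exact prfTaut (fun v hv => by
      rw [hv.vimp]; intro _; exact hv.vverum)
  | cons φ t ih =>
    have h1 : Prf Ax (X.imp φ) := h φ (List.mem_cons_self)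
    have h2 : Prf Ax (X.imp (Form.bigAnd t)) := ih (fun γ hγ => h γ (List.mem_cons_of_mem _ hγ))
    have t3 : Prf Ax ((X.imp φ).imp ((X.imp (Form.bigAnd t)).imp
        (X.imp (Form.bigAnd (φ :: t))))) :=
      prfTaut (fun v hv => by
        show v ((X.imp φ).imp ((X.imp (Form.bigAnd t)).imp (X.imp (φ.and (Form.bigAnd t)))))
        rw [hv.vimp, hv.vimp, hv.vimp, hv.vimp, hv.vimp, hv.2]; tauto)
    exact (t3.mp h1).mp h2

/-- deduction-style: from a proof using premises in `φ :: L'` to an implication. -/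
lemma prfDeduction {L L' : List (Form A AP)} {φ ψ : Form A AP}
    (hL : ∀ γ ∈ L, γ = φ ∨ γ ∈ L')
    (h : Prf Ax ((Form.bigAnd L).imp ψ)) :
    Prf Ax ((Form.bigAnd L').imp (φ.imp ψ)) := by
  set X : Form A AP := (Form.bigAnd L').and φ with hX
  have hmem : ∀ γ ∈ L, Prf Ax (X.imp γ) := by
    intro γ hγ
    rcases hL γ hγ with h1 | h1
    · subst h1
      exact prfTaut (fun v hv => by rw [hv.vimp, hv.2]; tauto)
    · have : Prf Ax (X.imp (Form.bigAnd L')) :=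
        prfTaut (fun v hv => by rw [hv.vimp, hv.2]; tauto)
      exact prfCompose this (prfBigAndMem h1)
  have hXL : Prf Ax (X.imp (Form.bigAnd L)) := prfBigAndIntro hmem
  have hXψ : Prf Ax (X.imp ψ) := prfCompose hXL h
  have texp : Prf Ax ((X.imp ψ).imp ((Form.bigAnd L').imp (φ.imp ψ))) :=
    prfTaut (fun v hv => by
      rw [hv.vimp, hv.vimp, hv.vimp, hv.vimp, hX, hv.2]; tauto)
  exact texp.mp hXψ

end Kit

section MCS

variable {A AP : Type} [Fintype A] [Nonempty AP] {Ax : Form A AP → Prop}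

lemma provesFrom_mono {Γ Δ : Set (Form A AP)} {φ : Form A AP} (h : Γ ⊆ Δ)
    (hp : ProvesFrom (Prf Ax) Γ φ) : ProvesFrom (Prf Ax) Δ φ := by
  obtain ⟨L, hL, hprf⟩ := hp
  exact ⟨L, fun γ hγ => h (hL γ hγ), hprf⟩

lemma provesFrom_of_prf {Γ : Set (Form A AP)} {φ : Form A AP} (h : Prf Ax φ) :
    ProvesFrom (Prf Ax) Γ φ :=
  ⟨[], by simp, prfOfImpOf h⟩

lemma provesFrom_insert {Γ : Set (Form A AP)} {φ ψ : Form A AP}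
    (h : ProvesFrom (Prf Ax) (insert φ Γ) ψ) :
    ProvesFrom (Prf Ax) Γ (φ.imp ψ) := by
  obtain ⟨L, hL, hprf⟩ := h
  classical
  refine ⟨L.filter (fun γ => γ ≠ φ), ?_, ?_⟩
  · intro γ hγ
    rw [List.mem_filter] at hγ
    rcases hL γ hγ.1 with h1 | h1
    · exact absurd h1 (by simpa using hγ.2)
    · exact h1
  · refine prfDeduction (fun γ hγ => ?_) hprf
    by_cases hc : γ = φ
    · exact Or.inl hc
    · exact Or.inr (List.mem_filter.mpr ⟨hγ, by simpa using hc⟩)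

lemma consistent_subset {Γ Δ : Set (Form A AP)} (h : Γ ⊆ Δ)
    (hc : ConsistentSet (Prf Ax) Δ) : ConsistentSet (Prf Ax) Γ :=
  fun hp => hc (provesFrom_mono h hp)

/-- a Lindenbaum lemma -/
lemma lindenbaum {Γ : Set (Form A AP)} (h : ConsistentSet (Prf Ax) Γ) :
    ∃ Δ : Set (Form A AP), Γ ⊆ Δ ∧ MaxConsistent (Prf Ax) Δ := by
  classical
  set S : Set (Set (Form A AP)) := {Δ | Γ ⊆ Δ ∧ ConsistentSet (Prf Ax) Δ} with hS
  have hchain : ∀ c ⊆ S, IsChain (· ⊆ ·) c → c.Nonempty → ∃ ub ∈ S, ∀ s ∈ c, s ⊆ ub := by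
    intro c hc hch ⟨c₀, hc₀⟩
    refine ⟨⋃₀ c, ⟨(hc hc₀).1.trans (Set.subset_sUnion_of_mem hc₀), ?_⟩,
      fun s hs => Set.subset_sUnion_of_mem hs⟩
    rintro ⟨L, hL, hprf⟩
    -- find a single element of the chain containing all of L
    have key : ∀ L' : List (Form A AP), (∀ γ ∈ L', γ ∈ ⋃₀ c) → ∃ s ∈ c, ∀ γ ∈ L', γ ∈ s := by
      intro L'
      induction L' with
      | nil => exact fun _ => ⟨c₀, hc₀, by simp⟩
      | cons γ t ih =>
        intro hmem
        obtain ⟨s, hs, hst⟩ := ih (fun γ' hγ' => hmem γ' (List.mem_cons_of_mem _ hγ'))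
        obtain ⟨s', hs', hγs'⟩ := hmem γ (List.mem_cons_self)
        rcases eq_or_ne s s' with hss | hss
        · subst hss
          exact ⟨s, hs, fun γ' hγ' => by
            rcases List.mem_cons.mp hγ' with h1 | h1
            · subst h1; exact hγs'
            · exact hst γ' h1⟩
        rcases hch.total hs hs' with hss2 | hss2
        · exact ⟨s', hs', fun γ' hγ' => by
            rcases List.mem_cons.mp hγ' with h1 | h1
            · subst h1; exact hγs'
            · exact hss2 (hst γ' h1)⟩
        · exact ⟨s, hs, fun γ' hγ' => by
            rcases List.mem_cons.mp hγ' with h1 | h1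
            · subst h1; exact hss2 hγs'
            · exact hst γ' h1⟩
    obtain ⟨s, hs, hmem⟩ := key L hL
    exact (hc hs).2 ⟨L, fun γ hγ => hmem γ hγ, hprf⟩
  obtain ⟨m, hm, hmax⟩ := zorn_subset_nonempty S hchain Γ ⟨subset_rfl, h⟩
  refine ⟨m, hmax.1.1, hmax.1.2, ?_⟩
  intro ψ hψ hcons
  have : insert ψ m ∈ S := ⟨hmax.1.1.trans (Set.subset_insert _ _), hcons⟩
  have := hmax.2 this (Set.subset_insert _ _)
  exact hψ (this (Set.mem_insert _ _))

variable {Γ : Set (Form A AP)} (hΓ : MaxConsistent (Prf Ax) Γ)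

include hΓ

lemma mcs_mem_of_proves {φ : Form A AP} (h : ProvesFrom (Prf Ax) Γ φ) : φ ∈ Γ := by
  by_contra hφ
  apply hΓ.1
  have h2 : ¬ ConsistentSet (Prf Ax) (insert φ Γ) := hΓ.2 φ hφ
  rw [ConsistentSet, not_not] at h2
  have h3 : ProvesFrom (Prf Ax) Γ (φ.imp Form.falsum) := provesFrom_insert h2
  obtain ⟨L1, hL1, hp1⟩ := h
  obtain ⟨L2, hL2, hp2⟩ := h3
  refine ⟨L1 ++ L2, ?_, ?_⟩
  · intro γ hγ; rcases List.mem_append.mp hγ with h | h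
    · exact hL1 γ h
    · exact hL2 γ h
  · have e1 : Prf Ax ((Form.bigAnd (L1 ++ L2)).imp (Form.bigAnd L1)) :=
      prfBigAndIntro (fun γ hγ => prfBigAndMem (List.mem_append_left _ hγ))
    have e2 : Prf Ax ((Form.bigAnd (L1 ++ L2)).imp (Form.bigAnd L2)) :=
      prfBigAndIntro (fun γ hγ => prfBigAndMem (List.mem_append_right _ hγ))
    have e3 : Prf Ax ((Form.bigAnd (L1 ++ L2)).imp φ) := prfCompose e1 hp1
    have e4 : Prf Ax ((Form.bigAnd (L1 ++ L2)).imp (φ.imp Form.falsum)) := prfCompose e2 hp2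
    have t : Prf Ax (((Form.bigAnd (L1 ++ L2)).imp φ).imp
        ((((Form.bigAnd (L1 ++ L2)).imp (φ.imp Form.falsum))).imp
          ((Form.bigAnd (L1 ++ L2)).imp Form.falsum))) :=
      prfTaut (fun v hv => by
        rw [hv.vimp, hv.vimp, hv.vimp, hv.vimp, hv.vimp, hv.vimp]; tauto)
    exact (t.mp e3).mp e4

lemma mcs_mem_of_thm {φ : Form A AP} (h : Prf Ax φ) : φ ∈ Γ :=
  mcs_mem_of_proves hΓ (provesFrom_of_prf h)

lemma mcs_mp {φ ψ : Form A AP} (h1 : φ ∈ Γ) (h2 : φ.imp ψ ∈ Γ) : ψ ∈ Γ := by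
  refine mcs_mem_of_proves hΓ ⟨[φ, φ.imp ψ], by simp [h1, h2], ?_⟩
  have e1 : Prf Ax ((Form.bigAnd [φ, φ.imp ψ]).imp φ) := prfBigAndMem (by simp)
  have e2 : Prf Ax ((Form.bigAnd [φ, φ.imp ψ]).imp (φ.imp ψ)) := prfBigAndMem (by simp)
  have t : Prf Ax (((Form.bigAnd [φ, φ.imp ψ]).imp φ).imp
      (((Form.bigAnd [φ, φ.imp ψ]).imp (φ.imp ψ)).imp ((Form.bigAnd [φ, φ.imp ψ]).imp ψ))) :=
    prfTaut (fun v hv => by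
      rw [hv.vimp, hv.vimp, hv.vimp, hv.vimp, hv.vimp, hv.vimp]; tauto)
  exact (t.mp e1).mp e2

lemma mcs_not_falsum : Form.falsum ∉ Γ := by
  intro h
  exact hΓ.1 ⟨[Form.falsum], by simp [h], prfBigAndMem (by simp)⟩

lemma mcs_neg_iff {φ : Form A AP} : φ.neg ∈ Γ ↔ φ ∉ Γ := by
  constructor
  · intro h1 h2
    apply mcs_not_falsum hΓ
    exact mcs_mp hΓ h2 (mcs_mp hΓ h1 (mcs_mem_of_thm hΓ
      (prfTaut (fun v hv => by rw [hv.vimp, hv.vimp, hv.1]; intro h a; exact absurd a h))))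
  · intro h1
    by_contra h2
    have h3 : ¬ ConsistentSet (Prf Ax) (insert φ Γ) := hΓ.2 φ h1
    have h4 : ¬ ConsistentSet (Prf Ax) (insert φ.neg Γ) := hΓ.2 φ.neg h2
    rw [ConsistentSet, not_not] at h3 h4
    have h5 := provesFrom_insert h3
    have h6 := provesFrom_insert h4
    apply hΓ.1
    have h7 : φ.imp Form.falsum ∈ Γ := mcs_mem_of_proves hΓ h5
    have h8 : φ.neg.imp Form.falsum ∈ Γ := mcs_mem_of_proves hΓ h6
    refine ⟨[φ.imp Form.falsum, φ.neg.imp Form.falsum], by simp [h7, h8], ?_⟩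
    refine prfTaut (fun v hv => by
      rw [hv.vimp]; simp only [Form.bigAnd]; rw [hv.2, hv.2, hv.vimp, hv.vimp, hv.1]
      intro h
      rcases Classical.em (v φ) with hc | hc
      · exact h.1 hc
      · exact h.2.1 hc)

lemma mcs_mem_or_neg (φ : Form A AP) : φ ∈ Γ ∨ φ.neg ∈ Γ := by
  by_cases h : φ ∈ Γ
  · exact Or.inl h
  · exact Or.inr ((mcs_neg_iff hΓ).2 h)

lemma mcs_and_iff {φ ψ : Form A AP} : φ.and ψ ∈ Γ ↔ (φ ∈ Γ ∧ ψ ∈ Γ) := by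
  constructor
  · intro h
    constructor
    · exact mcs_mp hΓ h (mcs_mem_of_thm hΓ (prfTaut (fun v hv => by
        rw [hv.vimp, hv.2]; tauto)))
    · exact mcs_mp hΓ h (mcs_mem_of_thm hΓ (prfTaut (fun v hv => by
        rw [hv.vimp, hv.2]; tauto)))
  · rintro ⟨h1, h2⟩
    have t : Prf Ax (φ.imp (ψ.imp (φ.and ψ))) := prfTaut (fun v hv => by
      rw [hv.vimp, hv.vimp, hv.2]; tauto)
    exact mcs_mp hΓ h2 (mcs_mp hΓ h1 (mcs_mem_of_thm hΓ t))

lemma mcs_bigAnd_iff {L : List (Form A AP)} : Form.bigAnd L ∈ Γ ↔ ∀ γ ∈ L, γ ∈ Γ := by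
  induction L with
  | nil =>
    simp only [List.not_mem_nil, false_implies, implies_true, iff_true]
    exact mcs_mem_of_thm hΓ (prfTaut (fun v hv => hv.vverum))
  | cons γ t ih =>
    show γ.and (Form.bigAnd t) ∈ Γ ↔ _
    rw [mcs_and_iff hΓ, ih]
    simp [List.forall_mem_cons]

lemma mcs_or_elim {φ ψ : Form A AP} (h : φ.or ψ ∈ Γ) : φ ∈ Γ ∨ ψ ∈ Γ := by
  by_contra hc
  push_neg at hc
  have h1 : φ.neg ∈ Γ := (mcs_neg_iff hΓ).2 hc.1
  have h2 : ψ.neg ∈ Γ := (mcs_neg_iff hΓ).2 hc.2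
  have h3 : (φ.neg.and ψ.neg) ∈ Γ := (mcs_and_iff hΓ).2 ⟨h1, h2⟩
  have h4 : (φ.neg.and ψ.neg).neg ∈ Γ := h
  exact (mcs_neg_iff hΓ).1 h4 h3

lemma mcs_bigOr_elim {L : List (Form A AP)} (h : Form.bigOr L ∈ Γ) : ∃ γ ∈ L, γ ∈ Γ := by
  induction L with
  | nil => exact absurd h (mcs_not_falsum hΓ)
  | cons γ t ih =>
    rcases mcs_or_elim hΓ h with h1 | h1
    · exact ⟨γ, List.mem_cons_self, h1⟩
    · obtain ⟨γ', h2, h3⟩ := ih h1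
      exact ⟨γ', List.mem_cons_of_mem _ h2, h3⟩

end MCS

section Modal

variable {A AP : Type} [Fintype A] [Nonempty AP] {Ax : Form A AP → Prop}

lemma prfDkMono {φ ψ : Form A AP} (B : Finset A) (hB : B.Nonempty)
    (h : Prf Ax (φ.imp ψ)) : Prf Ax ((Form.dk B hB φ).imp (Form.dk B hB ψ)) :=
  (Prf.axK B hB).mp (Prf.nec B hB h)

/-- the canonical relation on sets of formulas -/
def CRel (Ax : Form A AP → Prop) (B : Finset A) (Γ Δ : Set (Form A AP)) : Prop :=
  ∀ (hB : B.Nonempty) (φ : Form A AP), Form.dk B hB φ ∈ Γ → φ ∈ Δ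

variable {Γ Δ Θ : Set (Form A AP)}

lemma mcs_dk_and (hΓ : MaxConsistent (Prf Ax) Γ) {B : Finset A} (hB : B.Nonempty)
    {φ ψ : Form A AP} (h1 : Form.dk B hB φ ∈ Γ) (h2 : Form.dk B hB ψ ∈ Γ) :
    Form.dk B hB (φ.and ψ) ∈ Γ := by
  have t : Prf Ax (φ.imp (ψ.imp (φ.and ψ))) := prfTaut (fun v hv => by
    rw [hv.vimp, hv.vimp, hv.2]; tauto)
  have k1 : Prf Ax ((Form.dk B hB φ).imp (Form.dk B hB (ψ.imp (φ.and ψ)))) :=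
    prfDkMono B hB t
  have k2 : Prf Ax ((Form.dk B hB (ψ.imp (φ.and ψ))).imp
      ((Form.dk B hB ψ).imp (Form.dk B hB (φ.and ψ)))) := Prf.axK B hB
  exact mcs_mp hΓ h2 (mcs_mp hΓ h1 (mcs_mem_of_thm hΓ (prfCompose k1 k2)))

lemma mcs_dk_bigAnd (hΓ : MaxConsistent (Prf Ax) Γ) {B : Finset A} (hB : B.Nonempty)
    {L : List (Form A AP)} (h : ∀ γ ∈ L, Form.dk B hB γ ∈ Γ) :
    Form.dk B hB (Form.bigAnd L) ∈ Γ := by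
  induction L with
  | nil => exact mcs_mem_of_thm hΓ (Prf.nec B hB (prfTaut (fun v hv => hv.vverum)))
  | cons γ t ih =>
    exact mcs_dk_and hΓ hB (h γ (List.mem_cons_self))
      (ih (fun γ' hγ' => h γ' (List.mem_cons_of_mem _ hγ')))

lemma crel_mono (hΓ : MaxConsistent (Prf Ax) Γ) {B B' : Finset A} (hB : B.Nonempty)
    (hsub : B ⊆ B') (h : CRel Ax B' Γ Δ) : CRel Ax B Γ Δ := by
  intro hB' φ hφ
  have hBne' : B'.Nonempty := hB.mono hsub
  exact h hBne' φ (mcs_mp hΓ hφ (mcs_mem_of_thm hΓ (Prf.axMono B B' hB' hBne' hsub)))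

lemma crel_symm (hΓ : MaxConsistent (Prf Ax) Γ) (hΔ : MaxConsistent (Prf Ax) Δ)
    {B : Finset A} (h : CRel Ax B Γ Δ) : CRel Ax B Δ Γ := by
  intro hB φ hφ
  by_contra hn
  have hnf : φ.neg ∈ Γ := (mcs_neg_iff hΓ).2 hn
  have hb : Prf Ax (φ.neg.imp (Form.dk B hB (Form.neg (Form.dk B hB φ.neg.neg)))) :=
    Prf.axB B hB
  have h1 : Form.dk B hB (Form.neg (Form.dk B hB φ.neg.neg)) ∈ Γ :=
    mcs_mp hΓ hnf (mcs_mem_of_thm hΓ hb)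
  have h2 : Form.neg (Form.dk B hB φ.neg.neg) ∈ Δ := h hB _ h1
  have h3 : Form.dk B hB φ.neg.neg ∈ Δ :=
    mcs_mp hΔ hφ (mcs_mem_of_thm hΔ (prfDkMono B hB (prfTaut (fun v hv => by
      rw [hv.vimp, hv.1, hv.1]; tauto))))
  exact (mcs_neg_iff hΔ).1 h2 h3

lemma crel_trans (hΓ : MaxConsistent (Prf Ax) Γ) {B : Finset A}
    (h1 : CRel Ax B Γ Δ) (h2 : CRel Ax B Δ Θ) : CRel Ax B Γ Θ := by
  intro hB φ hφ
  exact h2 hB φ (h1 hB _ (mcs_mp hΓ hφ (mcs_mem_of_thm hΓ (Prf.ax4 B hB))))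

lemma crel_refl_of_alive (hΓ : MaxConsistent (Prf Ax) Γ) {B : Finset A} (hB : B.Nonempty)
    (halive : Form.aliveGrp B hB ∈ Γ) : CRel Ax B Γ Γ := by
  intro hB' φ hφ
  by_contra hn
  have hnf : φ.neg ∈ Γ := (mcs_neg_iff hΓ).2 hn
  have h1 : Form.dk B hB φ.neg.neg ∈ Γ :=
    mcs_mp hΓ hφ (mcs_mem_of_thm hΓ (prfDkMono B hB (prfTaut (fun v hv => by
      rw [hv.vimp, hv.1, hv.1]; tauto))))
  have h2 : Form.dk B hB (Form.dk B hB φ.neg.neg) ∈ Γ :=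
    mcs_mp hΓ h1 (mcs_mem_of_thm hΓ (Prf.ax4 B hB))
  have h3 : Form.dk B hB (Form.neg (Form.dk B hB φ.neg.neg)) ∈ Γ :=
    mcs_mp hΓ hnf (mcs_mem_of_thm hΓ (Prf.axB B hB))
  have h4 : Form.dk B hB ((Form.dk B hB φ.neg.neg).and
      (Form.neg (Form.dk B hB φ.neg.neg))) ∈ Γ := mcs_dk_and hΓ hB h2 h3
  have h5 : Form.dk B hB (Form.falsum : Form A AP) ∈ Γ :=
    mcs_mp hΓ h4 (mcs_mem_of_thm hΓ (prfDkMono B hB (prfTaut (fun v hv => by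
      rw [hv.vimp, hv.2, hv.1]; intro h; exact absurd h.1 h.2))))
  exact (mcs_neg_iff hΓ).1 halive h5

lemma alive_of_crel_refl (hΓ : MaxConsistent (Prf Ax) Γ) {B : Finset A} (hB : B.Nonempty)
    (h : CRel Ax B Γ Γ) : Form.aliveGrp B hB ∈ Γ := by
  by_contra hn
  have h1 : (Form.dk B hB (Form.falsum : Form A AP)).neg.neg ∈ Γ := (mcs_neg_iff hΓ).2 hn
  have h2 : Form.dk B hB (Form.falsum : Form A AP) ∈ Γ :=
    mcs_mp hΓ h1 (mcs_mem_of_thm hΓ (prfTaut (fun v hv => by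
      rw [hv.vimp, hv.1, hv.1]; tauto)))
  exact mcs_not_falsum hΓ (h hB _ h2)

lemma crel_exists (hΓ : MaxConsistent (Prf Ax) Γ) {B : Finset A} (hB : B.Nonempty)
    {χ : Form A AP} (h : (Form.dk B hB χ).neg ∈ Γ) :
    ∃ Δ : Set (Form A AP), MaxConsistent (Prf Ax) Δ ∧ CRel Ax B Γ Δ ∧ χ.neg ∈ Δ := by
  classical
  set Θ₀ : Set (Form A AP) := {ψ | Form.dk B hB ψ ∈ Γ} with hΘ₀
  have hcons : ConsistentSet (Prf Ax) (insert χ.neg Θ₀) := by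
    intro hpf
    obtain ⟨L, hL, hp⟩ := provesFrom_insert hpf
    have hp2 : Prf Ax ((Form.bigAnd L).imp χ) := by
      refine prfCompose hp (prfTaut (fun v hv => by
        rw [hv.vimp, hv.vimp, hv.1]; intro hh
        by_contra hc
        exact hv.vfalsum (hh hc)))
    have hk : Prf Ax ((Form.dk B hB (Form.bigAnd L)).imp (Form.dk B hB χ)) :=
      prfDkMono B hB hp2
    have hbig : Form.dk B hB (Form.bigAnd L) ∈ Γ :=
      mcs_dk_bigAnd hΓ hB (fun γ hγ => hL γ hγ)
    have : Form.dk B hB χ ∈ Γ := mcs_mp hΓ hbig (mcs_mem_of_thm hΓ hk)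
    exact (mcs_neg_iff hΓ).1 h this
  obtain ⟨Δ, hsub, hΔ⟩ := lindenbaum hcons
  refine ⟨Δ, hΔ, ?_, hsub (Set.mem_insert _ _)⟩
  intro hB' φ hφ
  exact hsub (Set.mem_insert_of_mem _ (by exact hφ))

lemma aliveGrp_congr {B B' : Finset A} (h : B = B') (hB : B.Nonempty) (hB' : B'.Nonempty) :
    (Form.aliveGrp B hB : Form A AP) = Form.aliveGrp B' hB' := by subst h; rfl

lemma alive_union (hΓ : MaxConsistent (Prf Ax) Γ) {B : Finset A} (hB : B.Nonempty)
    (hall : ∀ a ∈ B, (Form.aliveAgent a : Form A AP) ∈ Γ) : Form.aliveGrp B hB ∈ Γ := by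
  classical
  induction hB using Finset.Nonempty.cons_induction with
  | singleton a => exact hall a (Finset.mem_singleton_self a)
  | cons a s ha hs ih =>
    have h1 : (Form.aliveGrp {a} (Finset.singleton_nonempty a) : Form A AP) ∈ Γ :=
      hall a (Finset.mem_cons_self a s)
    have h2 : (Form.aliveGrp s hs : Form A AP) ∈ Γ :=
      ih (fun b hb => hall b (Finset.mem_cons_of_mem hb))
    have h3 := mcs_mp hΓ ((mcs_and_iff hΓ).2 ⟨h1, h2⟩)
      (mcs_mem_of_thm hΓ (Prf.axUnion {a} s (Finset.singleton_nonempty a) hs))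
    have he : ({a} ∪ s : Finset A) = Finset.cons a s ha := by
      ext x; simp [Finset.mem_cons, or_comm]
    rwa [aliveGrp_congr he (unionNE (Finset.singleton_nonempty a)) _] at h3

lemma mcs_exists_alive (hΓ : MaxConsistent (Prf Ax) Γ) :
    ∃ a : A, (Form.aliveAgent a : Form A AP) ∈ Γ := by
  have h := mcs_mem_of_thm hΓ (Prf.axNE (Ax := Ax))
  obtain ⟨γ, hγ, hγΓ⟩ := mcs_bigOr_elim hΓ h
  obtain ⟨a, _, rfl⟩ := List.mem_map.mp hγ
  exact ⟨a, hγΓ⟩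

lemma mcs_dead_of_not_alive (hΓ : MaxConsistent (Prf Ax) Γ) {a : A}
    (h : (Form.aliveAgent a : Form A AP) ∉ Γ) : (Form.deadAgent a : Form A AP) ∈ Γ := by
  by_contra hn
  exact h ((mcs_neg_iff hΓ).2 hn)

lemma mcs_deadGrp (hΓ : MaxConsistent (Prf Ax) Γ) {C : Finset A}
    (h : ∀ a ∈ C, (Form.deadAgent a : Form A AP) ∈ Γ) : (Form.deadGrp C : Form A AP) ∈ Γ := by
  refine (mcs_bigAnd_iff hΓ).2 ?_
  intro γ hγ
  obtain ⟨a, ha, rfl⟩ := List.mem_map.mp hγ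
  exact h a (Finset.mem_toList.mp ha)

/-- the key consequence of axiom `P`: a `B`-related pair of MCSs whose alive agents are
exactly `B` must coincide. -/
lemma mcs_p_eq (hΓ : MaxConsistent (Prf Ax) Γ) (hΔ : MaxConsistent (Prf Ax) Δ)
    {B : Finset A} (hB : B.Nonempty) (hrel : CRel Ax B Γ Δ)
    (hlΓ : ∀ a : A, (Form.aliveAgent a : Form A AP) ∈ Γ ↔ a ∈ B)
    (hlΔ : ∀ a : A, (Form.aliveAgent a : Form A AP) ∈ Δ ↔ a ∈ B) : Γ = Δ := by
  classical
  have hdeadΓ : (Form.deadGrp Bᶜ : Form A AP) ∈ Γ :=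
    mcs_deadGrp hΓ (fun a ha => mcs_dead_of_not_alive hΓ (fun hal =>
      (Finset.mem_compl.mp ha) ((hlΓ a).1 hal)))
  have hdeadΔ : (Form.deadGrp Bᶜ : Form A AP) ∈ Δ :=
    mcs_deadGrp hΔ (fun a ha => mcs_dead_of_not_alive hΔ (fun hal =>
      (Finset.mem_compl.mp ha) ((hlΔ a).1 hal)))
  have haliveΓ : (Form.aliveGrp B hB : Form A AP) ∈ Γ :=
    alive_union hΓ hB (fun a ha => (hlΓ a).2 ha)
  have hsub : Γ ⊆ Δ := by
    intro φ hφ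
    have hconj : (((Form.aliveGrp B hB).and (Form.deadGrp Bᶜ)).and φ : Form A AP) ∈ Γ :=
      (mcs_and_iff hΓ).2 ⟨(mcs_and_iff hΓ).2 ⟨haliveΓ, hdeadΓ⟩, hφ⟩
    have hdk : Form.dk B hB ((Form.deadGrp Bᶜ).imp φ) ∈ Γ :=
      mcs_mp hΓ hconj (mcs_mem_of_thm hΓ (Prf.axP B hB))
    exact mcs_mp hΔ hdeadΔ (hrel hB _ hdk)
  refine Set.Subset.antisymm hsub (fun φ hφ => ?_)
  by_contra hn
  exact (mcs_neg_iff hΔ).1 (hsub ((mcs_neg_iff hΓ).2 hn)) hφ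

end Modal

section Histories

variable {A AP : Type} [Fintype A] [Nonempty AP] {Ax : Form A AP → Prop}

/-- last world of a path -/
def lastOf {α W : Type _} (w : W) (l : List (α × W)) : W := (l.map Prod.snd).getLastD w

lemma lastOf_nil {α W : Type _} (w : W) : lastOf w ([] : List (α × W)) = w := rfl

lemma lastOf_cons {α W : Type _} (w x : W) (C : α) (t : List (α × W)) :
    lastOf w ((C, x) :: t) = lastOf x t := by
  show ((x :: t.map Prod.snd)).getLastD w = (t.map Prod.snd).getLastD x
  rw [List.getLastD_cons]

lemma lastOf_concat {α W : Type _} (w x : W) (C : α) (l : List (α × W)) :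
    lastOf w (l ++ [(C, x)]) = x := by
  simp [lastOf, List.getLastD_concat]

lemma lastOf_append {α W : Type _} (l₁ l₂ : List (α × W)) (w : W) :
    lastOf w (l₁ ++ l₂) = lastOf (lastOf w l₁) l₂ := by
  induction l₁ generalizing w with
  | nil => rfl
  | cons s t ih =>
    obtain ⟨C, x⟩ := s
    rw [List.cons_append, lastOf_cons, lastOf_cons, ih]

lemma hist_last_eq {W₀ : Type _} {M : PseudoData A AP W₀} (h : Hist M) :
    h.last = lastOf h.first h.steps := rfl

lemma isHist_append {W₀ : Type _} {M : PseudoData A AP W₀} {C : Finset A} {x : W₀} :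
    ∀ {l : List (Finset A × W₀)} {w : W₀}, IsHist M w l → M.rel C (lastOf w l) x →
      IsHist M w (l ++ [(C, x)]) := by
  intro l
  induction l with
  | nil => exact fun hh hr => ⟨hr, trivial⟩
  | cons s t ih =>
    obtain ⟨D, y⟩ := s
    intro w hh hr
    rw [lastOf_cons] at hr
    exact ⟨hh.1, ih hh.2 hr⟩

lemma isHist_suffix {W₀ : Type _} {M : PseudoData A AP W₀} {l₂ : List (Finset A × W₀)} :
    ∀ {l₁ : List (Finset A × W₀)} {w : W₀}, IsHist M w (l₁ ++ l₂) →
      IsHist M (lastOf w l₁) l₂ := by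
  intro l₁
  induction l₁ with
  | nil => exact fun hh => hh
  | cons s t ih =>
    obtain ⟨D, y⟩ := s
    intro w hh
    rw [lastOf_cons]
    exact ih hh.2

/-- drop the longest suffix of `a`-labelled steps -/
noncomputable def trunk {W₀ : Type _} (a : A) (l : List (Finset A × W₀)) :
    List (Finset A × W₀) :=
  (l.reverse.dropWhile (fun s => decide (a ∈ s.1))).reverse

lemma trunk_decomp {W₀ : Type _} (a : A) (l : List (Finset A × W₀)) :
    ∃ t, l = trunk a l ++ t ∧ ∀ s ∈ t, a ∈ s.1 := by
  refine ⟨(l.reverse.takeWhile (fun s => decide (a ∈ s.1))).reverse, ?_, ?_⟩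
  · conv_lhs => rw [← List.reverse_reverse l,
      ← List.takeWhile_append_dropWhile (p := fun s => decide (a ∈ s.1)) (l := l.reverse)]
    rw [List.reverse_append, trunk]
  · intro s hs
    have := List.mem_takeWhile_imp (List.mem_reverse.mp hs)
    simpa using this

lemma trunk_prefix {W₀ : Type _} (a : A) (l : List (Finset A × W₀)) :
    trunk a l <+: l := by
  obtain ⟨t, ht, _⟩ := trunk_decomp a l
  exact ⟨t, ht.symm⟩

lemma trunk_concat {W₀ : Type _} {a : A} {C : Finset A} (x : W₀)
    (l : List (Finset A × W₀)) (h : a ∈ C) : trunk a (l ++ [(C, x)]) = trunk a l := by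
  unfold trunk
  rw [List.reverse_append]
  show ((((C, x) :: []) ++ l.reverse).dropWhile _).reverse = _
  rw [List.cons_append, List.nil_append, List.dropWhile_cons_of_pos (by simpa using h)]

lemma histStep_inv {W₀ : Type _} {M : PseudoData A AP W₀} {a : A} {h h' : Hist M}
    (hs : histStep M a h h') :
    h'.first = h.first ∧ trunk a h'.steps = trunk a h.steps := by
  obtain ⟨B, w, haB, hf, hst⟩ := hs
  exact ⟨hf, by rw [hst, trunk_concat _ _ haB]⟩

lemma histRel_inv {W₀ : Type _} {M : PseudoData A AP W₀} {a : A} {h h' : Hist M}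
    (hr : histRel M a h h') :
    h'.first = h.first ∧ trunk a h'.steps = trunk a h.steps := by
  induction hr with
  | single hstep =>
    rcases hstep with hs | hs
    · exact histStep_inv hs
    · have := histStep_inv hs
      exact ⟨this.1.symm, this.2.symm⟩
  | tail _ hstep ih =>
    rcases hstep with hs | hs
    · have := histStep_inv hs
      exact ⟨this.1.trans ih.1, this.2.trans ih.2⟩
    · have := histStep_inv hs
      exact ⟨this.1.symm.trans ih.1, this.2.symm.trans ih.2⟩

lemma histRel_symm {W₀ : Type _} {M : PseudoData A AP W₀} {a : A} {h h' : Hist M}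
    (hr : histRel M a h h') : histRel M a h' h := by
  induction hr with
  | single hstep => exact Relation.TransGen.single hstep.symm
  | tail _ hstep ih => exact Relation.TransGen.trans (Relation.TransGen.single hstep.symm) ih

/-- the canonical pseudo-model of `Prf Ax` -/
abbrev CanPsm (A AP : Type) [Fintype A] [Nonempty AP] (Ax : Form A AP → Prop) :
    PseudoData A AP {Γ : Set (Form A AP) // MaxConsistent (Prf Ax) Γ} :=
  canonicalPsm A AP (Prf Ax)

lemma canRel_iff {B : Finset A} {Γ Δ : {Γ : Set (Form A AP) // MaxConsistent (Prf Ax) Γ}} :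
    (CanPsm A AP Ax).rel B Γ Δ ↔ CRel Ax B Γ.1 Δ.1 := Iff.rfl

lemma chain_crel {B : Finset A} (hB : B.Nonempty) :
    ∀ (l : List (Finset A × {Γ : Set (Form A AP) // MaxConsistent (Prf Ax) Γ}))
      (w : {Γ : Set (Form A AP) // MaxConsistent (Prf Ax) Γ}), l ≠ [] →
      IsHist (CanPsm A AP Ax) w l → (∀ s ∈ l, B ⊆ s.1) →
      CRel Ax B w.1 (lastOf w l).1 := by
  intro l
  induction l with
  | nil => exact fun w hne => absurd rfl hne
  | cons s t ih =>
    obtain ⟨C, x⟩ := s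
    intro w _ hh hlab
    have hsub : B ⊆ C := hlab (C, x) (List.mem_cons_self)
    have hCx : CRel Ax C w.1 x.1 := hh.1
    have hBx : CRel Ax B w.1 x.1 := crel_mono w.2 hB hsub hCx
    rw [lastOf_cons]
    rcases eq_or_ne t [] with ht | ht
    · subst ht; exact hBx
    · exact crel_trans w.2 hBx (ih x ht hh.2 (fun s hs => hlab s (List.mem_cons_of_mem _ hs)))

lemma histRel_alive {a : A} {h g : Hist (CanPsm A AP Ax)}
    (hrel : histRel (CanPsm A AP Ax) a h g) :
    CRel Ax {a} h.last.1 h.last.1 := by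
  obtain ⟨h₂, hr, -⟩ := Relation.TransGen.head'_iff.1 hrel
  have hone : Finset.Nonempty ({a} : Finset A) := Finset.singleton_nonempty a
  rcases hr with hs | hs
  · obtain ⟨B, w, haB, hf, hsteps⟩ := hs
    have hv := h₂.valid
    rw [hsteps, hf] at hv
    have hrel2 : (CanPsm A AP Ax).rel B (lastOf h.first h.steps) w :=
      (isHist_suffix hv).1
    have c1 : CRel Ax B h.last.1 w.1 := hrel2
    have c2 : CRel Ax {a} h.last.1 w.1 :=
      crel_mono h.last.2 hone (Finset.singleton_subset_iff.2 haB) c1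
    exact crel_trans h.last.2 c2 (crel_symm h.last.2 w.2 c2)
  · obtain ⟨B, w, haB, hf, hsteps⟩ := hs
    have hv := h.valid
    rw [hsteps] at hv
    have hrel2 : (CanPsm A AP Ax).rel B (lastOf h.first h₂.steps) w :=
      (isHist_suffix hv).1
    have hlw : h.last = w := by rw [hist_last_eq, hsteps, lastOf_concat]
    have c1 : CRel Ax B (lastOf h.first h₂.steps).1 h.last.1 := by rw [hlw]; exact hrel2
    have c2 : CRel Ax {a} (lastOf h.first h₂.steps).1 h.last.1 :=
      crel_mono (lastOf h.first h₂.steps).2 hone (Finset.singleton_subset_iff.2 haB) c1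
    exact crel_trans h.last.2 (crel_symm (lastOf h.first h₂.steps).2 h.last.2 c2) c2

lemma alive_last_of_histRel {a : A} {h g : Hist (CanPsm A AP Ax)}
    (hrel : histRel (CanPsm A AP Ax) a h g) :
    (Form.aliveAgent a : Form A AP) ∈ h.last.1 :=
  alive_of_crel_refl h.last.2 (Finset.singleton_nonempty a) (histRel_alive hrel)

lemma histRel_self_of_alive {a : A} {h : Hist (CanPsm A AP Ax)}
    (hal : (Form.aliveAgent a : Form A AP) ∈ h.last.1) :
    histRel (CanPsm A AP Ax) a h h := by
  have hcrel : CRel Ax {a} h.last.1 h.last.1 :=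
    crel_refl_of_alive h.last.2 (Finset.singleton_nonempty a) hal
  have hval : IsHist (CanPsm A AP Ax) h.first (h.steps ++ [({a}, h.last)]) :=
    isHist_append h.valid (by exact hcrel)
  set h' : Hist (CanPsm A AP Ax) := ⟨h.first, h.steps ++ [({a}, h.last)], hval⟩ with hh'
  have hstep : histStep (CanPsm A AP Ax) a h h' :=
    ⟨{a}, h.last, Finset.mem_singleton_self a, rfl, rfl⟩
  exact Relation.TransGen.trans (Relation.TransGen.single (Or.inl hstep))
    (Relation.TransGen.single (Or.inr hstep))

/-- the unravelling lemma: histories related by every agent of `B` have `B`-related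
last worlds. -/
lemma lemmaU {B : Finset A} (hB : B.Nonempty) {h h' : Hist (CanPsm A AP Ax)}
    (hrel : ∀ a ∈ B, histRel (CanPsm A AP Ax) a h h') :
    CRel Ax B h.last.1 h'.last.1 := by
  classical
  have hinv : ∀ a ∈ B, h'.first = h.first ∧ trunk a h'.steps = trunk a h.steps :=
    fun a ha => histRel_inv (hrel a ha)
  obtain ⟨a₀, ha₀, hmax⟩ := Finset.exists_max_image B (fun a => (trunk a h.steps).length) hB
  set c := trunk a₀ h.steps with hc
  have hfirst : h'.first = h.first := (hinv a₀ ha₀).1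
  have hdec : ∀ (g : Hist (CanPsm A AP Ax)),
      (∀ a ∈ B, trunk a g.steps = trunk a h.steps) →
      ∃ d, g.steps = c ++ d ∧ ∀ s ∈ d, B ⊆ s.1 := by
    intro g hgt
    have hcpre : c <+: g.steps := by
      rw [hc, ← hgt a₀ ha₀]; exact trunk_prefix _ _
    obtain ⟨d, hd⟩ := hcpre
    refine ⟨d, hd.symm, ?_⟩
    intro s hs a ha
    obtain ⟨t, hteq, htall⟩ := trunk_decomp a g.steps
    have h1 : trunk a g.steps <+: g.steps := trunk_prefix _ _
    have hcpre2 : c <+: g.steps := ⟨d, hd⟩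
    have hlen : (trunk a g.steps).length ≤ c.length := by
      rw [hgt a ha, hc]; exact hmax a ha
    have h2 : trunk a g.steps <+: c := List.prefix_of_prefix_length_le h1 hcpre2 hlen
    obtain ⟨e, he⟩ := h2
    have hte : trunk a g.steps ++ t = trunk a g.steps ++ (e ++ d) := by
      rw [← hteq, ← List.append_assoc, he, hd]
    have ht2 : t = e ++ d := by
      exact List.append_cancel_left hte
    exact htall s (by rw [ht2]; exact List.mem_append_right _ hs)
  obtain ⟨d, hdeq, hdall⟩ := hdec h (fun a _ => rfl)
  obtain ⟨d', hdeq', hdall'⟩ := hdec h' (fun a ha => (hinv a ha).2)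
  set x := lastOf h.first c with hx
  have hxh : IsHist (CanPsm A AP Ax) x d := by
    have hv := h.valid; rw [hdeq] at hv; exact isHist_suffix hv
  have hxh' : IsHist (CanPsm A AP Ax) x d' := by
    have hv := h'.valid; rw [hdeq', hfirst] at hv; exact isHist_suffix hv
  have hlast : h.last = lastOf x d := by
    rw [hist_last_eq, hdeq, lastOf_append, hx]
  have hlast' : h'.last = lastOf x d' := by
    rw [hist_last_eq, hdeq', hfirst, lastOf_append, hx]
  by_cases hd0 : d = []
  · by_cases hd0' : d' = []
    · have hee : h'.last = h.last := by
        rw [hlast, hlast', hd0, hd0']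
      have halive : ∀ a ∈ B, (Form.aliveAgent a : Form A AP) ∈ h.last.1 :=
        fun a ha => alive_last_of_histRel (hrel a ha)
      have := crel_refl_of_alive h.last.2 hB (alive_union h.last.2 hB halive)
      rw [hee]; exact this
    · have c2 : CRel Ax B x.1 h'.last.1 := by
        rw [hlast']; exact chain_crel hB d' x hd0' hxh' hdall'
      rw [hlast, hd0]; exact c2
  · have c1 : CRel Ax B x.1 h.last.1 := by
      rw [hlast]; exact chain_crel hB d x hd0 hxh hdall
    have c1' : CRel Ax B h.last.1 x.1 := crel_symm x.2 h.last.2 c1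
    by_cases hd0' : d' = []
    · rw [hlast', hd0']; exact c1'
    · have c2 : CRel Ax B x.1 h'.last.1 := by
        rw [hlast']; exact chain_crel hB d' x hd0' hxh' hdall'
      exact crel_trans h.last.2 c1' c2

end Histories

section Sigma

variable {A AP : Type} [Fintype A] [Nonempty AP] {Ax : Form A AP → Prop}

lemma mem_sigmaWorld {W₀ : Type} {M : PEData A AP W₀} {v : sigmaVert M} {w : W₀} :
    v ∈ sigmaWorld M w ↔ (M.rel v.1.1 w w ∧ v.1.2 = {w' | M.rel v.1.1 w w'}) := by
  constructor
  · intro hv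
    obtain ⟨a, -, rfl⟩ := Finset.mem_image.mp hv
    exact ⟨(Finset.mem_filter.mp a.2).2, rfl⟩
  · rintro ⟨h1, h2⟩
    refine Finset.mem_image.mpr
      ⟨⟨v.1.1, Finset.mem_filter.mpr ⟨Finset.mem_univ _, h1⟩⟩, Finset.mem_attach _ _, ?_⟩
    apply Subtype.ext
    exact Prod.ext rfl h2.symm

/-- the vertex `v^w_a` -/
def vtx {W₀ : Type} (M : PEData A AP W₀) (a : A) (w : W₀) (h : M.rel a w w) :
    sigmaVert M := ⟨(a, {w' | M.rel a w w'}), w, h, rfl⟩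

lemma vtx_mem {W₀ : Type} {M : PEData A AP W₀} {a : A} {w : W₀} (h : M.rel a w w) :
    vtx M a w h ∈ sigmaWorld M w := mem_sigmaWorld.mpr ⟨h, rfl⟩

lemma sigma_isModel {W₀ : Type} (M : PEData A AP W₀) (hne : ∀ w : W₀, ∃ a, M.rel a w w) :
    (sigmaModel M).IsModel := by
  have hworld : ∀ w : W₀, sigmaWorld M w ∈ (sigmaModel M).S := by
    intro w
    obtain ⟨a, ha⟩ := hne w
    exact ⟨⟨vtx M a w ha, vtx_mem ha⟩, w, subset_rfl⟩
  refine ⟨⟨?_, ?_, ?_, ?_⟩, ?_, ?_⟩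
  · exact fun X hX => hX.1
  · rintro ⟨⟨a, E⟩, w, hw, hE⟩
    exact ⟨Finset.singleton_nonempty _, w, by
      intro v hv
      replace hv := Finset.mem_singleton.mp hv
      subst hv
      exact mem_sigmaWorld.mpr ⟨hw, hE⟩⟩
  · rintro X ⟨-, w, hXw⟩ Y hYX hYne
    exact ⟨hYne, w, hYX.trans hXw⟩
  · rintro X ⟨-, w, hXw⟩ v hv u hu hchi
    have h1 := mem_sigmaWorld.mp (hXw hv)
    have h2 := mem_sigmaWorld.mp (hXw hu)
    have hfst : v.1.1 = u.1.1 := hchi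
    apply Subtype.ext
    apply Prod.ext hfst
    rw [h1.2, h2.2, hfst]
  · rintro X ⟨hXS, hmax⟩
    obtain ⟨-, w, hXw⟩ := hXS
    exact ⟨w, hmax _ (hworld w) hXw⟩
  · rintro X ⟨w, rfl⟩
    exact hworld w

/-- the unravelled canonical partial epistemic model -/
abbrev CanPE (A AP : Type) [Fintype A] [Nonempty AP] (Ax : Form A AP → Prop) :
    PEData A AP (Hist (CanPsm A AP Ax)) := unravel (CanPsm A AP Ax)

lemma canPE_live {a : A} {h : Hist (CanPsm A AP Ax)} :
    (CanPE A AP Ax).rel a h h ↔ (Form.aliveAgent a : Form A AP) ∈ h.last.1 :=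
  ⟨fun hr => alive_last_of_histRel hr, fun hal => histRel_self_of_alive hal⟩

lemma canPE_ne (h : Hist (CanPsm A AP Ax)) : ∃ a, (CanPE A AP Ax).rel a h h := by
  obtain ⟨a, ha⟩ := mcs_exists_alive h.last.2
  exact ⟨a, canPE_live.2 ha⟩

lemma class_eq_of_histRel {a : A} {h g : Hist (CanPsm A AP Ax)}
    (hr : (CanPE A AP Ax).rel a h g) :
    {g' | (CanPE A AP Ax).rel a h g'} = {g' | (CanPE A AP Ax).rel a g g'} := by
  ext g'
  constructor
  · intro h1
    exact Relation.TransGen.trans (histRel_symm hr) h1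
  · intro h1
    exact Relation.TransGen.trans hr h1

/-- if a group `B` is shared between the simplexes of two histories, the histories are
`a`-related for every `a ∈ B`. -/
lemma histRel_of_subset {h g : Hist (CanPsm A AP Ax)} {B : Finset A}
    (hsub : (↑B : Set A) ⊆ (sigmaModel (CanPE A AP Ax)).chi ''
      ((↑(sigmaWorld (CanPE A AP Ax) h) : Set (sigmaVert (CanPE A AP Ax))) ∩
        ↑(sigmaWorld (CanPE A AP Ax) g))) :
    ∀ a ∈ B, (CanPE A AP Ax).rel a h g := by
  intro a ha
  obtain ⟨v, hv, hva⟩ := hsub (Finset.mem_coe.mpr ha)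
  rw [Set.mem_inter_iff, Finset.mem_coe, Finset.mem_coe] at hv
  have h1 := mem_sigmaWorld.mp hv.1
  have h2 := mem_sigmaWorld.mp hv.2
  have hva' : v.1.1 = a := hva
  rw [hva'] at h1 h2
  have : g ∈ {g' | (CanPE A AP Ax).rel a h g'} := by
    rw [h1.2.symm.trans h2.2]
    exact h2.1
  exact this

lemma subset_of_histRel {h g : Hist (CanPsm A AP Ax)} {B : Finset A}
    (hrel : ∀ a ∈ B, (CanPE A AP Ax).rel a h g) :
    (↑B : Set A) ⊆ (sigmaModel (CanPE A AP Ax)).chi ''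
      ((↑(sigmaWorld (CanPE A AP Ax) h) : Set (sigmaVert (CanPE A AP Ax))) ∩
        ↑(sigmaWorld (CanPE A AP Ax) g)) := by
  intro a ha
  rw [Finset.mem_coe] at ha
  have hr := hrel a ha
  have hhh : (CanPE A AP Ax).rel a h h := Relation.TransGen.trans hr (histRel_symm hr)
  have hgg : (CanPE A AP Ax).rel a g g := Relation.TransGen.trans (histRel_symm hr) hr
  refine ⟨vtx _ a h hhh, ?_, rfl⟩
  rw [Set.mem_inter_iff, Finset.mem_coe, Finset.mem_coe]
  refine ⟨vtx_mem hhh, mem_sigmaWorld.mpr ⟨hgg, ?_⟩⟩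
  exact class_eq_of_histRel hr

/-- injectivity on worlds: equal simplexes have equal last MCSs. -/
lemma sigmaWorld_inj {h g : Hist (CanPsm A AP Ax)}
    (heq : sigmaWorld (CanPE A AP Ax) h = sigmaWorld (CanPE A AP Ax) g) :
    h.last = g.last := by
  classical
  set B : Finset A := Finset.univ.filter
    (fun a => (Form.aliveAgent a : Form A AP) ∈ h.last.1) with hB
  have hmemB : ∀ a, a ∈ B ↔ (Form.aliveAgent a : Form A AP) ∈ h.last.1 := by
    intro a; simp [hB]
  have hrelB : ∀ a ∈ B, (CanPE A AP Ax).rel a h g := by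
    intro a ha
    have hhh : (CanPE A AP Ax).rel a h h := canPE_live.2 ((hmemB a).1 ha)
    have hv : vtx _ a h hhh ∈ sigmaWorld (CanPE A AP Ax) g := heq ▸ vtx_mem hhh
    have h2 := mem_sigmaWorld.mp hv
    have : g ∈ {g' | (CanPE A AP Ax).rel a h g'} := by
      have hcls : {g' | (CanPE A AP Ax).rel a h g'} = {g' | (CanPE A AP Ax).rel a g g'} :=
        h2.2
      rw [hcls]
      exact h2.1
    exact this
  have hliveg : ∀ a, (Form.aliveAgent a : Form A AP) ∈ g.last.1 ↔ a ∈ B := by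
    intro a
    constructor
    · intro hal
      have hgg : (CanPE A AP Ax).rel a g g := canPE_live.2 hal
      have hv : vtx _ a g hgg ∈ sigmaWorld (CanPE A AP Ax) h := heq ▸ vtx_mem hgg
      have h2 := mem_sigmaWorld.mp hv
      exact (hmemB a).2 (canPE_live.1 h2.1)
    · intro ha
      exact alive_last_of_histRel (histRel_symm (hrelB a ha))
  have hBne : B.Nonempty := by
    obtain ⟨a, ha⟩ := mcs_exists_alive h.last.2
    exact ⟨a, (hmemB a).2 ha⟩
  have hcrel : CRel Ax B h.last.1 g.last.1 := lemmaU hBne (fun a ha => hrelB a ha)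
  exact Subtype.ext (mcs_p_eq h.last.2 g.last.2 hBne hcrel
    (fun a => (hmemB a).symm) hliveg)

/-- the truth lemma. -/
lemma truth_lemma (ψ : Form A AP) :
    ∀ h : Hist (CanPsm A AP Ax),
      (sigmaModel (CanPE A AP Ax)).sat (sigmaWorld (CanPE A AP Ax) h) ψ ↔ ψ ∈ h.last.1 := by
  induction ψ with
  | atom p =>
    intro h
    show p ∈ (sigmaModel (CanPE A AP Ax)).label _ ↔ _
    constructor
    · rintro ⟨g, hg, hp⟩
      have := sigmaWorld_inj hg
      rw [this]
      exact hp
    · intro hp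
      exact ⟨h, rfl, hp⟩
  | neg ψ ih =>
    intro h
    show ¬ _ ↔ _
    rw [ih h, mcs_neg_iff h.last.2]
  | and ψ χ ih1 ih2 =>
    intro h
    show (_ ∧ _) ↔ _
    rw [ih1 h, ih2 h, mcs_and_iff h.last.2]
  | dk B hB ψ ih =>
    intro h
    constructor
    · intro hsat
      by_contra hn
      have hneg : (Form.dk B hB ψ).neg ∈ h.last.1 := (mcs_neg_iff h.last.2).2 hn
      obtain ⟨Δ, hΔ, hcrel, hψΔ⟩ := crel_exists h.last.2 hB hneg
      have hval : IsHist (CanPsm A AP Ax) h.first (h.steps ++ [(B, ⟨Δ, hΔ⟩)]) :=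
        isHist_append h.valid (by exact hcrel)
      set h' : Hist (CanPsm A AP Ax) := ⟨h.first, h.steps ++ [(B, ⟨Δ, hΔ⟩)], hval⟩ with hh'
      have hlast' : h'.last = ⟨Δ, hΔ⟩ := by
        rw [hist_last_eq]
        exact lastOf_concat _ _ _ _
      have hrel : ∀ a ∈ B, (CanPE A AP Ax).rel a h h' := by
        intro a ha
        exact Relation.TransGen.single (Or.inl ⟨B, ⟨Δ, hΔ⟩, ha, rfl, rfl⟩)
      have hsub := subset_of_histRel hrel
      have hsat' := hsat (sigmaWorld (CanPE A AP Ax) h') ⟨h', rfl⟩ hsub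
      have hψ : ψ ∈ h'.last.1 := (ih h').1 hsat'
      rw [hlast'] at hψ
      exact (mcs_neg_iff hΔ).1 hψΔ hψ
    · intro hdk X' hX' hsub
      obtain ⟨g, rfl⟩ := hX'
      have hrel := histRel_of_subset hsub
      have hcrel : CRel Ax B h.last.1 g.last.1 := lemmaU hB hrel
      exact (ih g).2 (hcrel hB ψ hdk)

end Sigma

end Compl

/-- Completeness of `SC` for simplicial models: if `φ` is valid in every
(generalized) simplicial model, then `φ` is provable in `SC`. -/
theorem completeness_SC_simplicial (A AP : Type) [Fintype A] [Nonempty AP]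
    (φ : Form A AP)
    (hval : ∀ (V : Type) (C : SimpData A AP V), C.IsModel → ∀ w ∈ C.Wld, C.sat w φ) :
    SC φ := by
  classical
  by_cases hc : ConsistentSet (Prf (fun _ : Form A AP => False)) {Form.neg φ}
  · obtain ⟨Δ, hsub, hΔ⟩ := Compl.lindenbaum hc
    let h₀ : Hist (Compl.CanPsm A AP (fun _ : Form A AP => False)) := ⟨⟨Δ, hΔ⟩, [], trivial⟩
    have hmod := Compl.sigma_isModel (Compl.CanPE A AP (fun _ : Form A AP => False))
      Compl.canPE_ne
    have hsat := hval _ (sigmaModel (Compl.CanPE A AP (fun _ : Form A AP => False))) hmod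
      (sigmaWorld (Compl.CanPE A AP (fun _ : Form A AP => False)) h₀) ⟨h₀, rfl⟩
    have hφ : φ ∈ Δ := (Compl.truth_lemma φ h₀).1 hsat
    have hneg : Form.neg φ ∈ Δ := hsub (Set.mem_singleton _)
    exact absurd hφ ((Compl.mcs_neg_iff hΔ).1 hneg)
  · rw [ConsistentSet, not_not] at hc
    obtain ⟨L, hL, hp⟩ := hc
    have h1 := Compl.prfDeduction (L' := ([] : List (Form A AP)))
      (fun γ hγ => Or.inl (by simpa using hL γ hγ)) hp
    have h2 : Prf (fun _ : Form A AP => False) ((Form.neg φ).imp Form.falsum) :=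
      h1.mp (Compl.prfTaut (fun v hv => hv.vverum))
    have h3 : Prf (fun _ : Form A AP => False) (((Form.neg φ).imp Form.falsum).imp φ) :=
      Compl.prfTaut (fun v hv => by
        rw [hv.vimp, hv.vimp, hv.1]
        intro h
        by_contra hn
        exact hv.vfalsum (h hn))
    exact h3.mp h2
end
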